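/- arXiv:1110.0620 — 10 statements merged into one kernel-verified Lean document; each statement's English description precedes it below -/
import Mathlib

section
/- In a weighted complete graph on n vertices (n ≥ 3) with symmetric weights satisfying the triangle inequality, the length of any Hamiltonian cycle is at most (n/2)·τ, where τ is the length of a shortest Hamiltonian cycle. -/
open Fin.NatCast Fin.CommRing

private lemma path_bound {V : Type*} {n : ℕ} [NeZero n] (d : V → V → ℝ)
    (hdiag : ∀ v, d v v = 0)
    (htri : ∀ u v w, d u w ≤ d u v + d v w)
    (c : Fin n ≃ V) :
    ∀ (k : ℕ) (a : Fin n),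
      d (c a) (c (a + (k : Fin n))) ≤
        ∑ j ∈ Finset.range k, d (c (a + (j : Fin n))) (c (a + (j : Fin n) + 1)) := by
  intro k
  induction k with
  | zero => intro a; simp [hdiag]
  | succ k ih =>
    intro a
    have hcast : ((k + 1 : ℕ) : Fin n) = (k : Fin n) + 1 := by push_cast; ring
    calc d (c a) (c (a + ((k + 1 : ℕ) : Fin n)))
        ≤ d (c a) (c (a + (k : Fin n))) +
            d (c (a + (k : Fin n))) (c (a + ((k + 1 : ℕ) : Fin n))) := htri _ _ _
      _ ≤ (∑ j ∈ Finset.range k, d (c (a + (j : Fin n))) (c (a + (j : Fin n) + 1))) +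
            d (c (a + (k : Fin n))) (c (a + (k : Fin n) + 1)) := by
          rw [hcast, ← add_assoc]
          exact add_le_add_left (ih a) _
      _ = _ := by rw [Finset.sum_range_succ]

theorem stmt_1 {V : Type*} [Fintype V] [DecidableEq V] (n : ℕ) [NeZero n] (hn : 3 ≤ n)
    (hcard : Fintype.card V = n) (d : V → V → ℝ)
    (hdiag : ∀ v, d v v = 0)
    (hsymm : ∀ u v, d u v = d v u)
    (hnonneg : ∀ u v, 0 ≤ d u v)
    (htri : ∀ u v w, d u w ≤ d u v + d v w)
    (τ : ℝ)
    (hτ : IsLeast {L : ℝ | ∃ c : Fin n ≃ V, L = ∑ i : Fin n, d (c i) (c (i + 1))} τ)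
    (c : Fin n ≃ V) :
    ∑ i : Fin n, d (c i) (c (i + 1)) ≤ ((n : ℝ) / 2) * τ := by
  obtain ⟨⟨c₀, hc₀⟩, hlb⟩ := hτ
  -- key : any edge is at most τ / 2
  have key : ∀ u v : V, 2 * d u v ≤ τ := by
    intro u v
    set a : Fin n := c₀.symm u with ha
    set b : Fin n := c₀.symm v with hb
    set k : ℕ := (b - a).val with hk
    have hkn : k ≤ n := le_of_lt (b - a).isLt
    have hab : a + (k : Fin n) = b := by
      rw [hk, Fin.cast_val_eq_self]; ring
    have hba : b + ((n - k : ℕ) : Fin n) = a := by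
      rw [Nat.cast_sub hkn, Fin.natCast_self, ← hab]; ring
    have h1 : d u v ≤ ∑ j ∈ Finset.range k,
        d (c₀ (a + (j : Fin n))) (c₀ (a + (j : Fin n) + 1)) := by
      have := path_bound d hdiag htri c₀ k a
      rwa [hab, ha, hb, c₀.apply_symm_apply, c₀.apply_symm_apply] at this
    have h2 : d v u ≤ ∑ j ∈ Finset.range (n - k),
        d (c₀ (b + (j : Fin n))) (c₀ (b + (j : Fin n) + 1)) := by
      have := path_bound d hdiag htri c₀ (n - k) b
      rwa [hba, ha, hb, c₀.apply_symm_apply, c₀.apply_symm_apply] at this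
    have hsplit : (∑ j ∈ Finset.range k,
          d (c₀ (a + (j : Fin n))) (c₀ (a + (j : Fin n) + 1))) +
        (∑ j ∈ Finset.range (n - k),
          d (c₀ (b + (j : Fin n))) (c₀ (b + (j : Fin n) + 1))) =
        ∑ i : Fin n, d (c₀ i) (c₀ (i + 1)) := by
      have hre : ∑ i : Fin n, d (c₀ i) (c₀ (i + 1)) =
          ∑ i : Fin n, d (c₀ (a + i)) (c₀ (a + i + 1)) :=
        (Fintype.sum_equiv (Equiv.addLeft a) _ _ (fun i => rfl)).symm
      have hrange : ∑ i : Fin n, d (c₀ (a + i)) (c₀ (a + i + 1)) =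
          ∑ j ∈ Finset.range n, d (c₀ (a + (j : Fin n))) (c₀ (a + (j : Fin n) + 1)) := by
        rw [← Fin.sum_univ_eq_sum_range
          (fun j => d (c₀ (a + (j : Fin n))) (c₀ (a + (j : Fin n) + 1))) n]
        exact Finset.sum_congr rfl fun i _ => by rw [Fin.cast_val_eq_self]
      have e2 : ∑ i ∈ Finset.Ico k n, d (c₀ (a + (i : Fin n))) (c₀ (a + (i : Fin n) + 1)) =
          ∑ j ∈ Finset.range (n - k), d (c₀ (b + (j : Fin n))) (c₀ (b + (j : Fin n) + 1)) := by
        rw [Finset.sum_Ico_eq_sum_range]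
        apply Finset.sum_congr rfl
        intro j _
        have hidx : a + ((k + j : ℕ) : Fin n) = b + (j : Fin n) := by
          push_cast
          rw [← add_assoc, hab]
        rw [hidx]
      rw [hre, hrange, Finset.range_eq_Ico n,
        ← Finset.sum_Ico_consecutive _ (Nat.zero_le k) hkn, e2, ← Finset.range_eq_Ico]
    have : 2 * d u v ≤ ∑ i : Fin n, d (c₀ i) (c₀ (i + 1)) := by
      rw [← hsplit]
      have := add_le_add h1 h2
      rw [hsymm v u] at this
      linarith
    rw [← hc₀] at this
    exact this
  calc ∑ i : Fin n, d (c i) (c (i + 1)) ≤ ∑ _i : Fin n, τ / 2 := by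
        apply Finset.sum_le_sum
        intro i _
        linarith [key (c i) (c (i + 1))]
    _ = (n : ℝ) / 2 * τ := by
        simp [Finset.sum_const]
        ring
end

section
/- In a weighted complete graph on n vertices (n even, n ≥ 4) with symmetric weights satisfying the triangle inequality, the sum of d(v,v') over all ordered pairs of distinct vertices v, v' is at most n²τ/4, where τ is the length of a shortest Hamiltonian cycle. -/
open Finset in
theorem sum_min_aux (m : ℕ) : ∑ k ∈ range (2*m), min k (2*m - k) = m * m := by
  have h2 : 2 * m = m + m := by omega
  rw [h2, Finset.sum_range_add]
  have e1 : ∀ k ∈ range m, min k (m + m - k) = k := by intro k hk; simp at hk; omega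
  have e2 : ∀ k ∈ range m, min (m+k) (m + m - (m+k)) = m - k := by intro k hk; simp at hk; omega
  rw [Finset.sum_congr rfl e1, Finset.sum_congr rfl e2]
  rw [← Finset.sum_range_reflect (fun k => m - k) m]
  have e3 : ∀ k ∈ range m, m - (m - 1 - k) = k + 1 := by intro k hk; simp at hk; omega
  rw [Finset.sum_congr rfl e3]
  have g2 : ∑ k ∈ range m, (k+1) = ∑ k ∈ range m, k + m := by rw [Finset.sum_add_distrib]; simp
  have g3 : (∑ k ∈ range m, k) * 2 = m * (m-1) := Finset.sum_range_id_mul_two m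
  have g5 : m * (m-1) + m = m * m := by cases m with
    | zero => simp
    | succ p => simp [Nat.succ_sub_one]; ring
  omega

theorem stmt_2 {V : Type*} [Fintype V] [DecidableEq V] (n : ℕ) [NeZero n] (hn : 4 ≤ n) (hev : Even n)
    (hcard : Fintype.card V = n) (d : V → V → ℝ)
    (hdiag : ∀ v, d v v = 0)
    (hsymm : ∀ u v, d u v = d v u)
    (hnonneg : ∀ u v, 0 ≤ d u v)
    (htri : ∀ u v w, d u w ≤ d u v + d v w)
    (τ : ℝ)
    (hτ : IsLeast {L : ℝ | ∃ c : Fin n ≃ V, L = ∑ i : Fin n, d (c i) (c (i + 1))} τ) :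
    ∑ v : V, ∑ v' ∈ Finset.univ.erase v, d v v' ≤ (n : ℝ) ^ 2 * τ / 4 := by
  obtain ⟨⟨c, hc⟩, hlb⟩ := hτ
  set S : Fin n → ℝ := fun k => ∑ i : Fin n, d (c i) (c (i + k)) with hS
  -- shifted cycle sum
  have hshift : ∀ m : Fin n, ∑ i : Fin n, d (c (i + m)) (c (i + m + 1)) = τ := by
    intro m
    rw [hc]
    exact Fintype.sum_equiv (Equiv.addRight m)
      (fun i => d (c (i + m)) (c (i + m + 1))) (fun j => d (c j) (c (j + 1))) (fun i => rfl)
  have hS0 : S 0 = 0 := by simp [hS, hdiag]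
  -- Lemma A
  open Fin.NatCast Fin.CommRing in
  have hA : ∀ m : ℕ, S (m : Fin n) ≤ m * τ := by
    intro m
    induction m with
    | zero => simp [hS0]
    | succ m ih =>
      have hcast : ((m + 1 : ℕ) : Fin n) = (m : Fin n) + 1 := by push_cast; ring
      have key : ∀ i : Fin n, d (c i) (c (i + ((m+1 : ℕ) : Fin n)))
          ≤ d (c i) (c (i + (m : Fin n))) + d (c (i + (m : Fin n))) (c (i + (m : Fin n) + 1)) := by
        intro i
        rw [hcast, ← add_assoc]
        exact htri _ _ _
      calc S ((m+1 : ℕ) : Fin n)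
          ≤ ∑ i : Fin n, (d (c i) (c (i + (m : Fin n))) + d (c (i + (m:Fin n))) (c (i + (m:Fin n) + 1))) :=
            Finset.sum_le_sum (fun i _ => key i)
        _ = S (m : Fin n) + τ := by rw [Finset.sum_add_distrib, hshift (m : Fin n)]
        _ ≤ m * τ + τ := by linarith
        _ = (m + 1 : ℕ) * τ := by push_cast; ring
  -- S k = S (-k)
  have hneg : ∀ k : Fin n, S k = S (-k) := by
    intro k
    simp only [hS]
    refine Fintype.sum_equiv (Equiv.addRight k) _ _ (fun i => ?_)
    simp only [Equiv.coe_addRight, add_neg_cancel_right]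
    exact hsymm _ _
  -- the key bound
  open Fin.NatCast Fin.CommRing in
  have hbound : ∀ k : Fin n, S k ≤ (min k.val (n - k.val) : ℕ) * τ := by
    intro k
    have h1 : S k ≤ (k.val : ℝ) * τ := by
      have := hA k.val
      rwa [Fin.cast_val_eq_self] at this
    have hnk : ((n - k.val : ℕ) : Fin n) = -k := by
      have hle : k.val ≤ n := le_of_lt k.isLt
      have h0 : ((n - k.val : ℕ) : Fin n) + ((k.val : ℕ) : Fin n) = 0 := by
        rw [← Nat.cast_add, Nat.sub_add_cancel hle]
        exact Fin.natCast_self n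
      rw [Fin.cast_val_eq_self] at h0
      linear_combination h0
    have h2 : S k ≤ ((n - k.val : ℕ) : ℝ) * τ := by
      have := hA (n - k.val)
      rw [hnk] at this
      rw [hneg k]
      exact this
    rcases Nat.le_total k.val (n - k.val) with h | h
    · rw [Nat.min_eq_left h]; exact h1
    · rw [Nat.min_eq_right h]; exact h2
  -- rewrite LHS
  have hL1 : ∑ v : V, ∑ v' ∈ Finset.univ.erase v, d v v' = ∑ v : V, ∑ v' : V, d v v' := by
    refine Finset.sum_congr rfl (fun v _ => ?_)
    exact Finset.sum_erase _ (hdiag v)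
  have hL2 : ∑ v : V, ∑ v' : V, d v v' = ∑ k : Fin n, S k := by
    rw [← Equiv.sum_comp c (fun v => ∑ v' : V, d v v')]
    have inner : ∀ i : Fin n, ∑ v' : V, d (c i) v' = ∑ k : Fin n, d (c i) (c (i + k)) := by
      intro i
      rw [← Equiv.sum_comp c (fun v' => d (c i) v')]
      refine Fintype.sum_equiv (Equiv.subRight i) _ _ (fun x => ?_)
      have hx : i + (x - i) = x := by open Fin.CommRing in ring
      simp only [Equiv.subRight_apply]
      rw [hx]
    rw [Finset.sum_congr rfl (fun i _ => inner i)]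
    exact Finset.sum_comm
  rw [hL1, hL2]
  -- final computation
  obtain ⟨m, hm⟩ := hev
  have hmn : n = 2 * m := by omega
  calc ∑ k : Fin n, S k
      ≤ ∑ k : Fin n, ((min k.val (n - k.val) : ℕ) : ℝ) * τ :=
        Finset.sum_le_sum (fun k _ => hbound k)
    _ = ((∑ k ∈ Finset.range n, min k (n - k) : ℕ) : ℝ) * τ := by
        rw [← Finset.sum_mul]
        congr 1
        rw [Nat.cast_sum]
        exact (Fin.sum_univ_eq_sum_range (fun k => ((min k (n - k) : ℕ) : ℝ)) n).symm ▸ rfl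
    _ = ((m * m : ℕ) : ℝ) * τ := by rw [hmn, sum_min_aux]
    _ = (n : ℝ) ^ 2 * τ / 4 := by
        have : (n : ℝ) = 2 * m := by exact_mod_cast congrArg Nat.cast hmn
        rw [this]; push_cast; ring
end

section
/- In a weighted complete graph on n vertices (n even, n ≥ 4) with symmetric weights satisfying the triangle inequality, there exists a vertex v* such that the sum of d(v, v*) over all v ≠ v* is at most nτ/4, where τ is the length of a shortest Hamiltonian cycle. -/
open Finset
open Fin.NatCast Fin.CommRing

lemma stmt3_grec (n : ℕ) :
    ∑ m ∈ Finset.range (n + 2), min m (n + 2 - m)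
      = (∑ m ∈ Finset.range n, min m (n - m)) + (n + 1) := by
  rw [Finset.sum_range_succ' (fun m => min m (n + 2 - m)) (n + 1)]
  have h1 : ∀ i ∈ Finset.range (n + 1), min (i + 1) (n + 2 - (i + 1)) = min i (n - i) + 1 := by
    intro i hi
    have hi' : i ≤ n := by simpa using Nat.lt_succ_iff.mp (Finset.mem_range.mp hi)
    have : n + 2 - (i + 1) = (n - i) + 1 := by omega
    rw [this, Nat.succ_min_succ]
  rw [Finset.sum_congr rfl h1, Finset.sum_add_distrib, Finset.sum_const, Finset.card_range,
    Finset.sum_range_succ]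
  simp

lemma stmt3_gbound (p : ℕ) :
    4 * (∑ m ∈ Finset.range (2 * p), min m (2 * p - m)) ≤ (2 * p) ^ 2 := by
  induction p with
  | zero => simp
  | succ p ih =>
    have h2 : 2 * (p + 1) = 2 * p + 2 := by ring
    rw [h2, stmt3_grec]
    nlinarith [ih]

theorem stmt_3 {V : Type*} [Fintype V] [DecidableEq V] (n : ℕ) [NeZero n] (hn : 4 ≤ n) (hev : Even n)
    (hcard : Fintype.card V = n) (d : V → V → ℝ)
    (hdiag : ∀ v, d v v = 0)
    (hsymm : ∀ u v, d u v = d v u)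
    (hnonneg : ∀ u v, 0 ≤ d u v)
    (htri : ∀ u v w, d u w ≤ d u v + d v w)
    (τ : ℝ)
    (hτ : IsLeast {L : ℝ | ∃ c : Fin n ≃ V, L = ∑ i : Fin n, d (c i) (c (i + 1))} τ) :
    ∃ vstar : V, ∑ v ∈ Finset.univ.erase vstar, d v vstar ≤ (n : ℝ) * τ / 4 := by
  obtain ⟨⟨c, hc⟩, -⟩ := hτ
  have hn0 : 0 < n := by omega
  have hτ0 : 0 ≤ τ := by
    rw [hc]; exact Finset.sum_nonneg fun i _ => hnonneg _ _
  -- shift invariance of the tour sum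
  have hshift : ∀ a : Fin n, ∑ i : Fin n, d (c (i + a)) (c (i + a + 1)) = τ := by
    intro a
    rw [hc]
    exact Fintype.sum_equiv (Equiv.addRight a)
      (fun i => d (c (i + a)) (c (i + a + 1))) (fun i => d (c i) (c (i + 1))) (fun i => rfl)
  -- triangle chain
  have hchain : ∀ m : ℕ, ∀ i : Fin n,
      d (c i) (c (i + (m : Fin n)))
        ≤ ∑ j ∈ Finset.range m, d (c (i + (j : Fin n))) (c (i + (j : Fin n) + 1)) := by
    intro m
    induction m with
    | zero => intro i; simp [hdiag]
    | succ m ih =>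
      intro i
      have h1 : ((m + 1 : ℕ) : Fin n) = (m : Fin n) + 1 := by push_cast; ring
      rw [Finset.sum_range_succ, h1, ← add_assoc]
      calc d (c i) (c (i + (m : Fin n) + 1))
          ≤ d (c i) (c (i + (m : Fin n)))
            + d (c (i + (m : Fin n))) (c (i + (m : Fin n) + 1)) := htri _ _ _
        _ ≤ _ := add_le_add_left (ih i) _
  set S : ℕ → ℝ := fun m => ∑ i : Fin n, d (c i) (c (i + (m : Fin n))) with hS
  have hSle : ∀ m : ℕ, S m ≤ m * τ := by
    intro m
    calc S m ≤ ∑ i : Fin n, ∑ j ∈ Finset.range m,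
          d (c (i + (j : Fin n))) (c (i + (j : Fin n) + 1)) :=
        Finset.sum_le_sum fun i _ => hchain m i
      _ = ∑ j ∈ Finset.range m, ∑ i : Fin n,
          d (c (i + (j : Fin n))) (c (i + (j : Fin n) + 1)) := Finset.sum_comm
      _ = ∑ j ∈ Finset.range m, τ := Finset.sum_congr rfl fun j _ => hshift (j : Fin n)
      _ = m * τ := by rw [Finset.sum_const, Finset.card_range, nsmul_eq_mul]
  have hSrefl : ∀ m : ℕ, m ≤ n → S (n - m) = S m := by
    intro m hm
    have hcast : ((n - m : ℕ) : Fin n) = -(m : Fin n) := by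
      have h0 : ((n - m : ℕ) : Fin n) + (m : Fin n) = 0 := by
        rw [← Nat.cast_add, Nat.sub_add_cancel hm]
        exact Fin.natCast_self n
      exact eq_neg_of_add_eq_zero_left h0
    simp only [hS, hcast]
    calc ∑ i : Fin n, d (c i) (c (i + -(m : Fin n)))
        = ∑ i : Fin n, d (c (i + (m : Fin n))) (c (i + (m : Fin n) + -(m : Fin n))) :=
          (Fintype.sum_equiv (Equiv.addRight (m : Fin n))
            (fun i => d (c (i + (m : Fin n))) (c (i + (m : Fin n) + -(m : Fin n))))
            (fun j => d (c j) (c (j + -(m : Fin n)))) (fun i => rfl)).symm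
      _ = ∑ i : Fin n, d (c (i + (m : Fin n))) (c i) := by
          refine Finset.sum_congr rfl fun i _ => ?_
          rw [add_neg_cancel_right]
      _ = ∑ i : Fin n, d (c i) (c (i + (m : Fin n))) :=
          Finset.sum_congr rfl fun i _ => hsymm _ _
  -- total double sum equals sum of S over range n
  have hpair : ∑ u : V, ∑ v : V, d u v = ∑ k ∈ Finset.range n, S k := by
    calc ∑ u : V, ∑ v : V, d u v
        = ∑ i : Fin n, ∑ j : Fin n, d (c i) (c j) := by
          rw [← Equiv.sum_comp c (fun u => ∑ v : V, d u v)]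
          exact Finset.sum_congr rfl fun i _ =>
            (Equiv.sum_comp c (fun v => d (c i) v)).symm
      _ = ∑ i : Fin n, ∑ k : Fin n, d (c i) (c (i + k)) := by
          refine Finset.sum_congr rfl fun i _ => ?_
          exact (Equiv.sum_comp (Equiv.addLeft i) (fun j => d (c i) (c j))).symm
      _ = ∑ k : Fin n, ∑ i : Fin n, d (c i) (c (i + k)) := Finset.sum_comm
      _ = ∑ k : Fin n, S (k : ℕ) := by
          refine Finset.sum_congr rfl fun k _ => ?_
          simp only [hS, Fin.cast_val_eq_self]
      _ = ∑ k ∈ Finset.range n, S k := Fin.sum_univ_eq_sum_range S n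
  -- bound for each k
  have hSmin : ∀ k ∈ Finset.range n, S k ≤ (min k (n - k) : ℕ) * τ := by
    intro k hk
    have hkn : k ≤ n := (Finset.mem_range.mp hk).le
    rcases le_total k (n - k) with h | h
    · rw [Nat.min_eq_left h]; exact hSle k
    · rw [Nat.min_eq_right h, ← hSrefl k hkn]; exact hSle (n - k)
  obtain ⟨p, hp⟩ := hev
  have hp2 : n = 2 * p := by omega
  have hmin4 : 4 * (∑ k ∈ Finset.range n, min k (n - k)) ≤ n ^ 2 := by
    rw [hp2]; exact stmt3_gbound p
  have htotal : ∑ u : V, ∑ v : V, d u v ≤ (n : ℝ) ^ 2 / 4 * τ := by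
    rw [hpair]
    calc ∑ k ∈ Finset.range n, S k
        ≤ ∑ k ∈ Finset.range n, ((min k (n - k) : ℕ) : ℝ) * τ :=
          Finset.sum_le_sum hSmin
      _ = ((∑ k ∈ Finset.range n, min k (n - k) : ℕ) : ℝ) * τ := by
          rw [← Finset.sum_mul]; push_cast; ring
      _ ≤ (n : ℝ) ^ 2 / 4 * τ := by
          have : ((∑ k ∈ Finset.range n, min k (n - k) : ℕ) : ℝ) ≤ (n : ℝ) ^ 2 / 4 := by
            have := hmin4
            have h4 : (4 : ℝ) * ((∑ k ∈ Finset.range n, min k (n - k) : ℕ) : ℝ) ≤ (n : ℝ) ^ 2 := by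
              exact_mod_cast this
            linarith
          exact mul_le_mul_of_nonneg_right this hτ0
  -- pick the minimizing vertex
  have hne : (Finset.univ : Finset V).Nonempty := by
    have : 0 < Fintype.card V := by omega
    exact Finset.univ_nonempty_iff.mpr (Fintype.card_pos_iff.mp this)
  obtain ⟨vstar, -, hminv⟩ :=
    Finset.exists_min_image Finset.univ (fun v => ∑ u : V, d u v) hne
  refine ⟨vstar, ?_⟩
  have hx : ∑ u ∈ Finset.univ.erase vstar, d u vstar = ∑ u : V, d u vstar :=
    Finset.sum_erase _ (hdiag vstar)
  rw [hx]
  have h1 : (n : ℝ) * ∑ u : V, d u vstar ≤ ∑ u : V, ∑ v : V, d u v := by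
    calc (n : ℝ) * ∑ u : V, d u vstar = ∑ v : V, ∑ u : V, d u vstar := by
          rw [Finset.sum_const, Finset.card_univ, hcard, nsmul_eq_mul]
      _ ≤ ∑ v : V, ∑ u : V, d u v :=
          Finset.sum_le_sum fun v _ => hminv v (Finset.mem_univ v)
      _ = ∑ u : V, ∑ v : V, d u v := Finset.sum_comm
  have hnpos : (0 : ℝ) < n := by exact_mod_cast hn0
  nlinarith [h1.trans htotal, hnpos]
end

section
/- For even n ≥ 4 and the circle-method schedule K*, the home/away assignment defined by: team t ∈ {0,…,n/2−1} plays home in mirrored-slot positions 2t, 2t+1, …, n+2t−2 (indices in {0,…,2n−3}) and away otherwise; team t ∈ {n/2,…,n−2} plays away in positions 2t−n+2, …, 2t and home otherwise; team n−1 plays away in positions 0,…,n−2 and home otherwise — is consistent: whenever teams i and j meet in a slot of the mirrored double round-robin (K*|K*), exactly one of them is assigned home and the other away. -/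
/-- Circle-method single round-robin schedule: opponent of team `t` in slot `s`. -/
def Kstar (n t s : ℕ) : ℕ :=
  if t = n - 1 then (if s % 2 = 0 then s / 2 else (s + n - 1) / 2)
  else
    let r := ((((s : ℤ) - (t : ℤ)) % ((n : ℤ) - 1)).toNat)
    if r = t then n - 1 else r

/-- Home/away assignment of the mirrored double round-robin `K*_DRR`:
`true` iff team `t` plays home in slot `s ∈ {0,…,2n-3}`. -/
def Home (n t s : ℕ) : Bool :=
  if t < n / 2 then decide (2 * t ≤ s ∧ s ≤ n + 2 * t - 2)
  else if t ≤ n - 2 then !(decide (2 * t - n + 2 ≤ s ∧ s ≤ 2 * t))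
  else decide (n - 1 ≤ s)

theorem stmt_5 (n : ℕ) (hn : 4 ≤ n) (hev : Even n) :
    ∀ s < 2 * n - 2, ∀ i < n,
      Home n i s ≠ Home n (Kstar n i (s % (n - 1))) s := by
  obtain ⟨k, hk⟩ := hev
  intro s hs i hi
  obtain ⟨u, hu⟩ : ∃ u, s % (n - 1) = u := ⟨_, rfl⟩
  rw [hu]
  have hult : u < n - 1 := hu ▸ Nat.mod_lt _ (by omega)
  have hsu : s = u ∨ s = u + (n - 1) := by
    have h2 := Nat.mod_add_div s (n - 1)
    obtain ⟨d, hd⟩ : ∃ d, s / (n - 1) = d := ⟨_, rfl⟩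
    rw [hu, hd] at h2
    have hdlt : d < 2 := by rw [← hd]; exact Nat.div_lt_of_lt_mul (by omega)
    interval_cases d <;> omega
  by_cases hA : i = n - 1
  · subst hA
    simp only [Kstar, if_pos rfl]
    by_cases hp : u % 2 = 0 <;>
      simp only [hp, if_true, if_false, reduceIte] <;>
      · simp only [Home]; split_ifs <;>
          rw [Ne, Bool.eq_iff_iff] <;>
          simp only [Bool.and_eq_true, Bool.or_eq_true, Bool.not_eq_true',
            decide_eq_true_eq, decide_eq_false_iff_not] <;> omega
  · have hr0 : ((n : ℤ) - 1) ≠ 0 := by omega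
    have hnn : (0:ℤ) ≤ ((u:ℤ) - i) % ((n:ℤ) - 1) := Int.emod_nonneg _ hr0
    obtain ⟨r, hr⟩ : ∃ r, (((u:ℤ) - (i:ℤ)) % ((n:ℤ) - 1)).toNat = r := ⟨_, rfl⟩
    have hr1 : (r:ℤ) = ((u:ℤ) - i) % ((n:ℤ) - 1) := by
      rw [← hr]; exact Int.toNat_of_nonneg hnn
    have hrlt : (r:ℤ) < (n:ℤ) - 1 := by
      rw [hr1]; exact Int.emod_lt_of_pos _ (by omega)
    obtain ⟨q, hq⟩ : ∃ q : ℤ, (u:ℤ) - i - r = ((n:ℤ) - 1) * q :=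
      ⟨((u:ℤ) - i) / ((n:ℤ) - 1), by
        rw [hr1]; linarith [Int.mul_ediv_add_emod ((u:ℤ) - i) ((n:ℤ) - 1)]⟩
    have hq1 : q < 1 := by
      by_contra h
      push_neg at h
      have h2 := mul_le_mul_of_nonneg_left h (show (0:ℤ) ≤ (n:ℤ) - 1 by omega)
      rw [mul_one] at h2
      omega
    have hq2 : (-2 : ℤ) < q := by
      by_contra h
      push_neg at h
      have h2 := mul_le_mul_of_nonneg_left h (show (0:ℤ) ≤ (n:ℤ) - 1 by omega)
      have h3 : ((n:ℤ) - 1) * (-2) = -2 * n + 2 := by ring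
      omega
    have hq01 : q = -1 ∨ q = 0 := by omega
    simp only [Kstar, if_neg hA, hr]
    have hrwq : (u:ℤ) - i - r = -((n:ℤ) - 1) ∨ (u:ℤ) - i - r = 0 := by
      rcases hq01 with h | h <;> rw [h] at hq <;> [left; right] <;> linarith
    have hrn : r ≤ n - 2 := by omega
    clear hq hq1 hq2 hq01 hr1 hrlt hnn hr
    by_cases hri : r = i
    · rw [if_pos hri]
      rw [hri] at hrwq
      simp only [Home]; split_ifs <;>
        rw [Ne, Bool.eq_iff_iff] <;>
        simp only [Bool.and_eq_true, Bool.or_eq_true, Bool.not_eq_true',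
          decide_eq_true_eq, decide_eq_false_iff_not] <;> omega
    · rw [if_neg hri]
      simp only [Home]; split_ifs <;>
        rw [Ne, Bool.eq_iff_iff] <;>
        simp only [Bool.and_eq_true, Bool.or_eq_true, Bool.not_eq_true',
          decide_eq_true_eq, decide_eq_false_iff_not] <;> omega
end

section
/- Let (u_0,…,u_{n-1}) be a shortest Hamiltonian cycle of length τ in a weighted complete graph on n vertices (n even, n ≥ 4) with symmetric nonnegative weights. For vertices u_i, u_j define h(u_i,u_j) as the length along the cycle from u_i to u_j in the forward direction if (j−i) mod n ≤ n/2 and in the backward direction otherwise. Then the sum over all ordered pairs of distinct vertices of h(u_i, u_j) equals n²τ/4. -/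
open Finset

lemma gauss_min (m : ℕ) :
    ∑ k ∈ range (2*m), (if k ≤ m then k else 2*m - k) = m * m := by
  rcases Nat.eq_zero_or_pos m with h | h
  · subst h; simp
  rw [range_eq_Ico, ← Finset.sum_Ico_consecutive _ (Nat.zero_le (m+1)) (by omega)]
  have h1 : ∑ k ∈ Ico 0 (m+1), (if k ≤ m then k else 2*m - k)
      = ∑ k ∈ range (m+1), k := by
    rw [← range_eq_Ico]
    refine sum_congr rfl fun k hk => ?_
    rw [if_pos (by simpa [Nat.lt_succ_iff] using hk)]
  have h2 : ∑ k ∈ Ico (m+1) (2*m), (if k ≤ m then k else 2*m - k)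
      = ∑ k ∈ range (m-1), (m - 1 - k) := by
    rw [Finset.sum_Ico_eq_sum_range, show 2*m - (m+1) = m - 1 by omega]
    refine sum_congr rfl fun k hk => ?_
    rw [if_neg (by omega)]
    simp only [mem_range] at hk
    omega
  have h3 : ∑ k ∈ range (m-1), (m - 1 - k) = ∑ k ∈ range (m-1), (k + 1) := by
    rw [← Finset.sum_range_reflect (fun j => j + 1) (m-1)]
    refine sum_congr rfl fun k hk => ?_
    simp only [mem_range] at hk
    omega
  have g1 := Finset.sum_range_id_mul_two (m+1)
  have g2 := Finset.sum_range_id_mul_two (m-1)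
  rw [h1, h2, h3, Finset.sum_add_distrib, Finset.sum_const, smul_eq_mul, mul_one, card_range]
  simp only [Nat.add_sub_cancel] at g1
  obtain ⟨q, rfl⟩ : ∃ q, m = q + 1 := ⟨m - 1, by omega⟩
  simp only [Nat.add_sub_cancel] at g2 ⊢
  rcases Nat.eq_zero_or_pos q with hq | hq
  · subst hq; simp_all
  obtain ⟨r, rfl⟩ : ∃ r, q = r + 1 := ⟨q - 1, by omega⟩
  simp only [Nat.add_sub_cancel] at g2
  nlinarith [g1, g2]

open Fin.NatCast in
theorem stmt_8 (n : ℕ) [NeZero n] (hn : 4 ≤ n) (hev : Even n)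
    (d : Fin n → Fin n → ℝ)
    (hsymm : ∀ u v, d u v = d v u)
    (hnonneg : ∀ u v, 0 ≤ d u v) :
    ∑ i : Fin n, ∑ j ∈ Finset.univ.erase i,
      (if (j - i).val ≤ n / 2
        then ∑ m ∈ Finset.range (j - i).val, d (i + (m : Fin n)) (i + (m : Fin n) + 1)
        else ∑ m ∈ Finset.range (i - j).val, d (i - (m : Fin n)) (i - (m : Fin n) - 1))
    = (n : ℝ) ^ 2 * (∑ i : Fin n, d i (i + 1)) / 4 := by
  obtain ⟨p, hp⟩ := hev
  set τ := ∑ i : Fin n, d i (i + 1) with hτ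
  -- shift lemmas
  have shiftF : ∀ c : Fin n, ∑ i : Fin n, d (i + c) (i + c + 1) = τ := by
    intro c
    exact Fintype.sum_equiv (Equiv.addRight c) _ _ (fun i => rfl)
  have shiftB : ∀ c : Fin n, ∑ i : Fin n, d (i - c) (i - c - 1) = τ := by
    intro c
    refine Fintype.sum_equiv (Equiv.subRight (c + 1)) _ _ (fun i => ?_)
    simp only [Equiv.subRight_apply]
    rw [sub_add_eq_sub_sub, sub_add_cancel, hsymm]
  -- reindex inner sum: j = i + k
  have step1 : ∀ i : Fin n, (Finset.univ.erase i)
      = (Finset.univ.erase (0 : Fin n)).map (Equiv.addLeft i).toEmbedding := by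
    intro i
    rw [Finset.map_erase]
    simp
  rw [Finset.sum_congr rfl (fun i _ => by rw [step1 i, Finset.sum_map])]
  simp only [Equiv.coe_toEmbedding, Equiv.coe_addLeft, add_sub_cancel_left,
    sub_add_cancel_left]
  -- now terms: if k.val ≤ n/2 then ... else ∑ m ∈ range (-k).val, ...
  rw [Finset.sum_comm]
  have neg_val : ∀ k : Fin n, k ∈ Finset.univ.erase (0 : Fin n) → ((-k : Fin n)).val = n - k.val := by
    intro k hk
    simp only [Finset.mem_erase] at hk
    rw [Fin.coe_neg, Nat.mod_eq_of_lt]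
    have : k.val ≠ 0 := fun h => hk.1 (Fin.ext h)
    omega
  have key : ∀ k : Fin n, k ∈ Finset.univ.erase (0 : Fin n) →
      (∑ i : Fin n, if (k : Fin n).val ≤ n / 2
        then ∑ m ∈ Finset.range k.val, d (i + (m : Fin n)) (i + (m : Fin n) + 1)
        else ∑ m ∈ Finset.range ((-k : Fin n)).val, d (i - (m : Fin n)) (i - (m : Fin n) - 1))
      = ((if k.val ≤ n / 2 then k.val else n - k.val : ℕ) : ℝ) * τ := by
    intro k hk
    by_cases hc : k.val ≤ n / 2
    · simp only [if_pos hc]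
      rw [Finset.sum_comm]
      simp only [shiftF]
      simp [mul_comm]
    · simp only [if_neg hc, neg_val k hk]
      rw [Finset.sum_comm]
      simp only [shiftB]
      simp [mul_comm]
  rw [Finset.sum_congr rfl key]
  rw [← Finset.sum_mul, ← Nat.cast_sum]
  -- compute the nat sum
  have hnat : (∑ k ∈ Finset.univ.erase (0 : Fin n),
      (if k.val ≤ n / 2 then k.val else n - k.val)) = p * p := by
    rw [Finset.sum_erase _ (by simp)]
    rw [show (∑ k : Fin n, if k.val ≤ n / 2 then k.val else n - k.val)
        = ∑ k ∈ Finset.range n, (if k ≤ n / 2 then k else n - k) from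
      Fin.sum_univ_eq_sum_range (fun k => if k ≤ n / 2 then k else n - k) n]
    have h2 : n = 2 * p := by omega
    rw [h2, show 2 * p / 2 = p by omega]
    exact gauss_min p
  rw [hnat]
  have : (n : ℝ) = 2 * p := by exact_mod_cast (by omega : n = 2 * p)
  rw [this]
  push_cast
  ring
end

section
/- Let d be a symmetric weight function on V = {v_0,…,v_{n-2}, v*} (n even, n ≥ 4) with triangle inequality, let τ' be the length of the cycle (v_0,…,v_{n-2}), and let τ be the length of a shortest Hamiltonian cycle on V. Then Σ_{t=0}^{n/2-1} (d(v_t,v*) + d(v*,v_{t+1}) − d(v_t,v_{t+1})) + Σ_{t=n/2}^{n-2} (d(v_{t-1},v*) + d(v*,v_t) − d(v_{t-1},v_t)) ≤ 2·Σ_{v ≠ v*} d(v,v*) − τ' + (3/2)τ. -/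
lemma path_le {V : Type*} (d : V → V → ℝ) (hdiag : ∀ v, d v v = 0)
    (htri : ∀ u v w, d u w ≤ d u v + d v w) (f : ℕ → V) :
    ∀ k, d (f 0) (f k) ≤ ∑ i ∈ Finset.range k, d (f i) (f (i + 1)) := by
  intro k
  induction k with
  | zero => simp [hdiag]
  | succ k ih =>
    rw [Finset.sum_range_succ]
    exact le_trans (htri _ (f k) _) (by linarith)

open Fin.NatCast in
lemma cycle_lb {V : Type*} {n : ℕ} [NeZero n] (d : V → V → ℝ)
    (hdiag : ∀ v, d v v = 0) (hsymm : ∀ u v, d u v = d v u)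
    (hnonneg : ∀ u v, 0 ≤ d u v)
    (htri : ∀ u v w, d u w ≤ d u v + d v w)
    (c : Fin n ≃ V) (x y : V) :
    2 * d x y ≤ ∑ i : Fin n, d (c i) (c (i + 1)) := by
  by_cases hxy : x = y
  · subst hxy
    rw [hdiag]
    have : (0:ℝ) ≤ ∑ i : Fin n, d (c i) (c (i + 1)) :=
      Finset.sum_nonneg fun i _ => hnonneg _ _
    linarith
  · set a := c.symm x with ha
    set b := c.symm y with hb
    have hab : b - a ≠ 0 := by
      intro h
      apply hxy
      have : a = b := by
        have := sub_eq_zero.mp h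
        exact this.symm
      have : c a = c b := by rw [this]
      simpa [ha, hb] using this
    set F : ℕ → V := fun j => c (a + (j : Fin n)) with hF
    have key : ∑ i : Fin n, d (c i) (c (i + 1))
        = ∑ j ∈ Finset.range n, d (F j) (F (j + 1)) := by
      rw [← Equiv.sum_comp (Equiv.addLeft a) (fun i => d (c i) (c (i + 1)))]
      rw [← Fin.sum_univ_eq_sum_range (fun j => d (F j) (F (j + 1))) n]
      apply Finset.sum_congr rfl
      intro i _
      have h1 : F i.val = c ((Equiv.addLeft a) i) := by
        simp [hF, Fin.cast_val_eq_self]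
      have h2 : F (i.val + 1) = c ((Equiv.addLeft a) i + 1) := by
        simp only [hF]
        congr 1
        push_cast [Fin.cast_val_eq_self]
        simp [add_assoc]
      rw [h1, h2]
    set mm := (b - a).val with hmm
    have hmmpos : 0 < mm := by
      rcases Nat.eq_zero_or_pos mm with h | h
      · exact absurd (Fin.ext (by simpa [hmm] using h)) hab
      · exact h
    have hmmlt : mm < n := (b - a).is_lt
    have hsplit : ∑ j ∈ Finset.range n, d (F j) (F (j + 1))
        = (∑ j ∈ Finset.range mm, d (F j) (F (j + 1)))
          + ∑ j ∈ Finset.Ico mm n, d (F j) (F (j + 1)) := by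
      simp only [Finset.range_eq_Ico]
      exact (Finset.sum_Ico_consecutive (fun j => d (F j) (F (j + 1))) (Nat.zero_le mm) hmmlt.le).symm
    have hF0 : F 0 = x := by simp [hF, ha]
    have hFm : F mm = y := by
      simp only [hF, hmm, Fin.cast_val_eq_self]
      rw [add_sub_cancel]
      simp [hb]
    have hFn : F n = x := by
      simp only [hF]
      rw [Fin.natCast_self]
      simp [ha]
    have first : d x y ≤ ∑ j ∈ Finset.range mm, d (F j) (F (j + 1)) := by
      have := path_le d hdiag htri F mm
      rwa [hF0, hFm] at this
    have second : d y x ≤ ∑ j ∈ Finset.Ico mm n, d (F j) (F (j + 1)) := by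
      rw [Finset.sum_Ico_eq_sum_range]
      have := path_le d hdiag htri (fun j => F (mm + j)) (n - mm)
      have e1 : mm + 0 = mm := by omega
      have e2 : mm + (n - mm) = n := by omega
      rw [e1, e2, hFm, hFn] at this
      refine le_trans this (le_of_eq ?_)
      apply Finset.sum_congr rfl
      intro j _
      have : mm + (j + 1) = mm + j + 1 := by omega
      rw [this]
    have : d y x = d x y := hsymm y x
    linarith [key, hsplit, first, second]

theorem stmt_11 {V : Type*} [Fintype V] [DecidableEq V] (n : ℕ) [NeZero n]
    (hn : 4 ≤ n) (hev : Even n) (hcard : Fintype.card V = n)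
    (d : V → V → ℝ)
    (hdiag : ∀ v, d v v = 0)
    (hsymm : ∀ u v, d u v = d v u)
    (hnonneg : ∀ u v, 0 ≤ d u v)
    (htri : ∀ u v w, d u w ≤ d u v + d v w)
    (v : ℕ → V) (vstar : V)
    (hper : ∀ i, v (i + (n - 1)) = v i)
    (hinj : Set.InjOn v (Set.Iio (n - 1)))
    (hvs : ∀ i < n - 1, v i ≠ vstar)
    (τ τ' : ℝ)
    (hτ : IsLeast {L : ℝ | ∃ c : Fin n ≃ V, L = ∑ i : Fin n, d (c i) (c (i + 1))} τ)
    (hτ' : τ' = ∑ i ∈ Finset.range (n - 1), d (v i) (v (i + 1))) :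
    (∑ t ∈ Finset.range (n / 2), (d (v t) vstar + d vstar (v (t + 1)) - d (v t) (v (t + 1))))
      + (∑ t ∈ Finset.Ico (n / 2) (n - 1),
          (d (v (t - 1)) vstar + d vstar (v t) - d (v (t - 1)) (v t)))
    ≤ 2 * (∑ x ∈ Finset.univ.erase vstar, d x vstar) - τ' + (3 / 2) * τ := by
  obtain ⟨k, hk⟩ := hev
  have hk2 : 2 ≤ k := by omega
  have hn2 : n / 2 = k := by omega
  -- every edge is at most τ/2
  obtain ⟨⟨c, hc⟩, -⟩ := hτ
  have hhalf : ∀ x y : V, d x y ≤ τ / 2 := by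
    intro x y
    have := cycle_lb d hdiag hsymm hnonneg htri c x y
    rw [← hc] at this
    linarith
  have hv0 : v (n - 1) = v 0 := by
    have := hper 0
    simpa using this
  set a : ℕ → ℝ := fun i => d (v i) vstar with ha
  set g : ℕ → ℝ := fun t => a t + a (t + 1) - d (v t) (v (t + 1)) with hg
  -- first sum
  have h1 : (∑ t ∈ Finset.range (n / 2),
      (d (v t) vstar + d vstar (v (t + 1)) - d (v t) (v (t + 1))))
      = ∑ t ∈ Finset.range (n / 2), g t := by
    apply Finset.sum_congr rfl
    intro t _
    simp [hg, ha, hsymm vstar (v (t + 1))]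
  -- second sum
  have h2 : (∑ t ∈ Finset.Ico (n / 2) (n - 1),
      (d (v (t - 1)) vstar + d vstar (v t) - d (v (t - 1)) (v t)))
      = ∑ s ∈ Finset.Ico (n / 2 - 1) (n - 2), g s := by
    rw [Finset.sum_Ico_eq_sum_range, Finset.sum_Ico_eq_sum_range]
    have hlen : n - 1 - n / 2 = n - 2 - (n / 2 - 1) := by omega
    rw [hlen]
    apply Finset.sum_congr rfl
    intro j _
    have e1 : n / 2 + j - 1 = n / 2 - 1 + j := by omega
    have e2 : n / 2 + j = (n / 2 - 1 + j) + 1 := by omega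
    rw [e1, e2]
    simp [hg, ha, hsymm vstar]
  -- splitting identity
  have s1 : ∑ t ∈ Finset.range (n / 2), g t
      = (∑ t ∈ Finset.range (n / 2 - 1), g t) + g (n / 2 - 1) := by
    have h : n / 2 = (n / 2 - 1) + 1 := by omega
    conv_lhs => rw [h]
    exact Finset.sum_range_succ _ _
  have s2 : (∑ t ∈ Finset.range (n / 2 - 1), g t)
      + ∑ t ∈ Finset.Ico (n / 2 - 1) (n - 2), g t
      = ∑ t ∈ Finset.range (n - 2), g t := by
    simp only [Finset.range_eq_Ico]
    exact Finset.sum_Ico_consecutive g (n := n / 2 - 1) (k := n - 2) (Nat.zero_le _) (by omega)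
  have s3 : ∑ t ∈ Finset.range (n - 1), g t
      = (∑ t ∈ Finset.range (n - 2), g t) + g (n - 2) := by
    have h : n - 1 = (n - 2) + 1 := by omega
    conv_lhs => rw [h]
    exact Finset.sum_range_succ _ _
  -- full sum of g
  have hshift : ∑ t ∈ Finset.range (n - 1), a (t + 1)
      = ∑ t ∈ Finset.range (n - 1), a t := by
    have e1 : ∑ i ∈ Finset.range ((n - 1) + 1), a i
        = (∑ i ∈ Finset.range (n - 1), a (i + 1)) + a 0 :=
      Finset.sum_range_succ' a (n - 1)
    have e2 : ∑ i ∈ Finset.range ((n - 1) + 1), a i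
        = (∑ i ∈ Finset.range (n - 1), a i) + a (n - 1) :=
      Finset.sum_range_succ a (n - 1)
    have e3 : a (n - 1) = a 0 := by simp [ha, hv0]
    linarith
  have h4 : ∑ t ∈ Finset.range (n - 1), g t
      = 2 * (∑ t ∈ Finset.range (n - 1), a t) - τ' := by
    have : ∑ t ∈ Finset.range (n - 1), g t
        = (∑ t ∈ Finset.range (n - 1), a t)
          + (∑ t ∈ Finset.range (n - 1), a (t + 1))
          - ∑ t ∈ Finset.range (n - 1), d (v t) (v (t + 1)) := by
      simp [hg, Finset.sum_add_distrib, Finset.sum_sub_distrib]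
    rw [this, hshift, hτ']
    ring
  -- the star sum
  have hS : ∑ x ∈ Finset.univ.erase vstar, d x vstar
      = ∑ t ∈ Finset.range (n - 1), a t := by
    symm
    apply Finset.sum_bij (fun i (_ : i ∈ Finset.range (n - 1)) => v i)
    · intro i hi
      rw [Finset.mem_range] at hi
      exact Finset.mem_erase.mpr ⟨hvs i hi, Finset.mem_univ _⟩
    · intro i hi j hj hij
      rw [Finset.mem_range] at hi hj
      exact hinj hi hj hij
    · intro x hx
      have hsub : (Finset.range (n - 1)).image v ⊆ Finset.univ.erase vstar := by
        intro y hy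
        rcases Finset.mem_image.mp hy with ⟨i, hi, rfl⟩
        rw [Finset.mem_range] at hi
        exact Finset.mem_erase.mpr ⟨hvs i hi, Finset.mem_univ _⟩
      have hcl : (Finset.univ.erase vstar).card ≤ ((Finset.range (n - 1)).image v).card := by
        rw [Finset.card_erase_of_mem (Finset.mem_univ _), Finset.card_univ, hcard,
          Finset.card_image_of_injOn (by rw [Finset.coe_range]; exact hinj),
          Finset.card_range]
      have heq := Finset.eq_of_subset_of_card_le hsub hcl
      rw [← heq] at hx
      rcases Finset.mem_image.mp hx with ⟨i, hi, rfl⟩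
      exact ⟨i, hi, rfl⟩
    · intro i _
      rfl
  -- final bounds
  have b1 : a (n / 2 - 1) ≤ τ / 2 := hhalf _ _
  have b2 : a (n / 2 - 1 + 1) ≤ τ / 2 := hhalf _ _
  have b3 : d (v (n - 2)) (v (n - 2 + 1)) ≤ τ / 2 := by
    have e : n - 2 + 1 = n - 1 := by omega
    rw [e, hv0]
    exact hhalf _ _
  have b4 : 0 ≤ a (n - 2) := hnonneg _ _
  have b5 : 0 ≤ a (n - 2 + 1) := hnonneg _ _
  have b6 : 0 ≤ d (v (n / 2 - 1)) (v (n / 2 - 1 + 1)) := hnonneg _ _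
  have g1 : g (n / 2 - 1)
      = a (n / 2 - 1) + a (n / 2 - 1 + 1) - d (v (n / 2 - 1)) (v (n / 2 - 1 + 1)) := rfl
  have g2 : g (n - 2) = a (n - 2) + a (n - 2 + 1) - d (v (n - 2)) (v (n - 2 + 1)) := rfl
  rw [h1, h2, hS]
  linarith [s1, s2, s3, h4]
end

section
/- For even n ≥ 4, in the mirrored double round-robin schedule K*_DRR with the specified home/away assignment, under Assumption A, the tour of every team t ∈ {0,…,n/2−1} visits the venues in the cyclic order (v_t, v*, v_{t+1}, v_{t+2}, …, v_{t-1}), hence its traveling distance equals τ' + d(v_t,v*) + d(v*,v_{t+1}) − d(v_t,v_{t+1}), where τ' is the length of the cycle (v_0,…,v_{n-2}). -/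
/-- Venue at which team `t` plays in slot `s ∈ {0,…,2n-3}` of `K*_DRR`:
its own venue for a home game, the opponent's venue for an away game. -/
def loc {V : Type*} (n : ℕ) (venue : ℕ → V) (t s : ℕ) : V :=
  if Home n t s = true then venue t else venue (Kstar n t (s % (n - 1)))

lemma nmod_eval (a b r : ℕ) (hr : r < b) (h : a = r ∨ a = r + b) : a % b = r := by
  rcases h with rfl | rfl
  · exact Nat.mod_eq_of_lt hr
  · rw [Nat.add_mod_right]; exact Nat.mod_eq_of_lt hr

lemma emod_eval (a b r : ℤ) (hr0 : 0 ≤ r) (hr : r < b) (h : a = r ∨ a + b = r) : a % b = r := by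
  rcases h with rfl | h
  · exact Int.emod_eq_of_lt hr0 hr
  · have h2 : (a + b * 1) % b = a % b := Int.add_mul_emod_self_left a b 1
    rw [mul_one, h] at h2
    rw [← h2, Int.emod_eq_of_lt hr0 hr]

lemma kstar_eval (n t s' r : ℕ) (htn : 2 * t + 2 ≤ n)
    (hr : r < n - 1) (h : s' = t + r ∨ s' + (n - 1) = t + r) :
    Kstar n t s' = if r = t then n - 1 else r := by
  have ht' : ¬ (t = n - 1) := by omega
  have hm : ((s' : ℤ) - t) % ((n:ℤ) - 1) = r := by
    apply emod_eval
    · exact Int.natCast_nonneg r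
    · omega
    · rcases h with h | h
      · left; omega
      · right; omega
  simp only [Kstar, if_neg ht', hm, Int.toNat_natCast]

def idx (n t s : ℕ) : ℕ :=
  if s < t then n - 1 - t + s
  else if s < 2 * t then s - t
  else if s ≤ n + 2 * t - 2 then t
  else if s = n + 2 * t - 1 then n - 1
  else s - n + 1 - t

lemma loc_eq {V : Type*} (n : ℕ) (hn : 4 ≤ n) (venue : ℕ → V)
    (t s : ℕ) (htn : 2 * t + 2 ≤ n) (hs : s < 2 * n - 2) :
    loc n venue t s = venue (idx n t s) := by
  have ht : t < n / 2 := by omega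
  by_cases hhome : 2 * t ≤ s ∧ s ≤ n + 2 * t - 2
  · have h1 : Home n t s = true := by
      rw [Home, if_pos ht]; exact decide_eq_true hhome
    rw [loc, if_pos h1]
    congr 1
    simp only [idx]; split_ifs <;> omega
  · have h1 : Home n t s = false := by
      rw [Home, if_pos ht]
      simp only [decide_eq_false_iff_not]; simpa using hhome
    rw [loc, h1]
    simp only [Bool.false_eq_true, if_false]
    congr 1
    rcases (by omega : s < 2 * t ∨ n + 2 * t - 1 ≤ s) with hcase | hcase
    · have hsm : s % (n - 1) = s := Nat.mod_eq_of_lt (by omega)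
      rw [hsm]
      rcases (by omega : s < t ∨ t ≤ s) with h2 | h2
      · rw [kstar_eval n t s (n - 1 - t + s) htn (by omega) (Or.inr (by omega))]
        rw [if_neg (by omega)]
        simp only [idx]; split_ifs <;> omega
      · rw [kstar_eval n t s (s - t) htn (by omega) (Or.inl (by omega))]
        rw [if_neg (by omega)]
        simp only [idx]; split_ifs <;> omega
    · have hsm : s % (n - 1) = s - (n - 1) :=
        nmod_eval _ _ _ (by omega) (Or.inr (by omega))
      rw [hsm]
      rw [kstar_eval n t (s - (n - 1)) (s - (n - 1) - t) htn (by omega) (Or.inl (by omega))]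
      rcases (by omega : s = n + 2 * t - 1 ∨ n + 2 * t ≤ s) with h2 | h2
      · rw [if_pos (by omega)]
        simp only [idx]; split_ifs <;> omega
      · rw [if_neg (by omega)]
        simp only [idx]; split_ifs <;> omega


theorem stmt_12 {V : Type*} [Fintype V] (n : ℕ) (hn : 4 ≤ n) (hev : Even n)
    (hcard : Fintype.card V = n)
    (d : V → V → ℝ)
    (hdiag : ∀ v, d v v = 0)
    (hsymm : ∀ u v, d u v = d v u)
    (hnonneg : ∀ u v, 0 ≤ d u v)
    (htri : ∀ u v w, d u w ≤ d u v + d v w)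
    (venue : ℕ → V) (hbij : Set.BijOn venue (Set.Iio n) Set.univ)
    (t : ℕ) (ht : t < n / 2) :
    ∑ s ∈ Finset.range (2 * n - 2),
        d (loc n venue t s) (loc n venue t ((s + 1) % (2 * n - 2)))
    = (∑ i ∈ Finset.range (n - 1), d (venue i) (venue ((i + 1) % (n - 1))))
      + d (venue t) (venue (n - 1)) + d (venue (n - 1)) (venue (t + 1))
      - d (venue t) (venue (t + 1)) := by
  have htn : 2 * t + 2 ≤ n := by
    obtain ⟨k, hk⟩ := hev; omega
  set m : ℕ := 2 * n - 2 with hm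
  set e : ℕ → ℝ := fun i => d (venue i) (venue ((i + 1) % (n - 1))) with he
  set f : ℕ → ℝ := fun s => d (venue (idx n t s)) (venue (idx n t ((s + 1) % m))) with hf
  have hloc : ∀ s ∈ Finset.range m,
      d (loc n venue t s) (loc n venue t ((s + 1) % m)) = f s := by
    intro s hs
    rw [Finset.mem_range] at hs
    rw [loc_eq n hn venue t s htn hs,
        loc_eq n hn venue t ((s + 1) % m) htn (Nat.mod_lt _ (by omega))]
  rw [Finset.sum_congr rfl hloc]
  -- split the sum
  have split1 : ∑ s ∈ Finset.range m, f s =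
      ((((∑ s ∈ Finset.Ico 0 t, f s) + ∑ s ∈ Finset.Ico t (2 * t), f s)
      + ∑ s ∈ Finset.Ico (2 * t) (n + 2 * t - 2), f s)
      + ∑ s ∈ Finset.Ico (n + 2 * t - 2) (n + 2 * t), f s)
      + ∑ s ∈ Finset.Ico (n + 2 * t) m, f s := by
    rw [Finset.range_eq_Ico,
        ← Finset.sum_Ico_consecutive f (Nat.zero_le (n + 2 * t)) (show n + 2 * t ≤ m by omega),
        ← Finset.sum_Ico_consecutive f (Nat.zero_le (n + 2 * t - 2)) (show n + 2 * t - 2 ≤ n + 2 * t by omega),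
        ← Finset.sum_Ico_consecutive f (Nat.zero_le (2 * t)) (show 2 * t ≤ n + 2 * t - 2 by omega),
        ← Finset.sum_Ico_consecutive f (Nat.zero_le t) (show t ≤ 2 * t by omega)]
  rw [split1]
  have P1 : ∑ s ∈ Finset.Ico 0 t, f s = ∑ i ∈ Finset.Ico (n - 1 - t) (n - 1), e i := by
    rw [Finset.sum_Ico_eq_sum_range, Finset.sum_Ico_eq_sum_range,
        show t - 0 = t by omega, show n - 1 - (n - 1 - t) = t by omega]
    apply Finset.sum_congr rfl
    intro j hj
    rw [Finset.mem_range] at hj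
    have e1 : idx n t (0 + j) = n - 1 - t + j := by simp only [idx]; split_ifs <;> omega
    have e2 : (0 + j + 1) % m = j + 1 := nmod_eval _ _ _ (by omega) (Or.inl (by omega))
    have e3 : idx n t (j + 1) = (n - 1 - t + j + 1) % (n - 1) := by
      rcases (by omega : j + 1 < t ∨ j + 1 = t) with h | h
      · rw [nmod_eval (n - 1 - t + j + 1) (n - 1) (n - t + j) (by omega) (Or.inl (by omega))]
        simp only [idx]; split_ifs <;> omega
      · rw [nmod_eval (n - 1 - t + j + 1) (n - 1) 0 (by omega) (Or.inr (by omega))]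
        simp only [idx]; split_ifs <;> omega
    simp only [hf, he, e1, e2, e3]
  have P2 : ∑ s ∈ Finset.Ico t (2 * t), f s = ∑ i ∈ Finset.range t, e i := by
    rw [Finset.sum_Ico_eq_sum_range, show 2 * t - t = t by omega]
    apply Finset.sum_congr rfl
    intro j hj
    rw [Finset.mem_range] at hj
    have e1 : idx n t (t + j) = j := by simp only [idx]; split_ifs <;> omega
    have e2 : (t + j + 1) % m = t + j + 1 := Nat.mod_eq_of_lt (by omega)
    have e3 : idx n t (t + j + 1) = (j + 1) % (n - 1) := by
      rw [nmod_eval (j + 1) (n - 1) (j + 1) (by omega) (Or.inl rfl)]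
      simp only [idx]; split_ifs <;> omega
    simp only [hf, he, e1, e2, e3]
  have P3 : ∑ s ∈ Finset.Ico (2 * t) (n + 2 * t - 2), f s = 0 := by
    apply Finset.sum_eq_zero
    intro s hs
    rw [Finset.mem_Ico] at hs
    have e1 : idx n t s = t := by simp only [idx]; split_ifs <;> omega
    have e2 : (s + 1) % m = s + 1 := Nat.mod_eq_of_lt (by omega)
    have e3 : idx n t (s + 1) = t := by simp only [idx]; split_ifs <;> omega
    simp only [hf, e1, e2, e3, hdiag]
  have P4 : ∑ s ∈ Finset.Ico (n + 2 * t - 2) (n + 2 * t), f s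
      = d (venue t) (venue (n - 1)) + d (venue (n - 1)) (venue (t + 1)) := by
    rw [Finset.sum_Ico_eq_sum_range, show n + 2 * t - (n + 2 * t - 2) = 2 by omega,
        Finset.sum_range_succ, Finset.sum_range_one]
    have hf1 : f (n + 2 * t - 2 + 0) = d (venue t) (venue (n - 1)) := by
      have e1 : idx n t (n + 2 * t - 2 + 0) = t := by simp only [idx]; split_ifs <;> omega
      have e2 : (n + 2 * t - 2 + 0 + 1) % m = n + 2 * t - 1 :=
        nmod_eval _ _ _ (by omega) (Or.inl (by omega))
      have e3 : idx n t (n + 2 * t - 1) = n - 1 := by simp only [idx]; split_ifs <;> omega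
      simp only [hf, e1, e2, e3]
    have hf2 : f (n + 2 * t - 2 + 1) = d (venue (n - 1)) (venue (t + 1)) := by
      have e1 : idx n t (n + 2 * t - 2 + 1) = n - 1 := by simp only [idx]; split_ifs <;> omega
      have e3 : idx n t ((n + 2 * t - 2 + 1 + 1) % m) = t + 1 := by
        rcases (by omega : 2 * t + 2 = n ∨ 2 * t + 3 ≤ n) with h | h
        · rw [nmod_eval (n + 2 * t - 2 + 1 + 1) m 0 (by omega) (Or.inr (by omega))]
          simp only [idx]; split_ifs <;> omega
        · rw [nmod_eval (n + 2 * t - 2 + 1 + 1) m (n + 2 * t) (by omega) (Or.inl (by omega))]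
          simp only [idx]; split_ifs <;> omega
      simp only [hf, e1, e3]
    rw [hf1, hf2]
  have P5 : ∑ s ∈ Finset.Ico (n + 2 * t) m, f s
      = ∑ i ∈ Finset.Ico (t + 1) (n - 1 - t), e i := by
    rw [Finset.sum_Ico_eq_sum_range, Finset.sum_Ico_eq_sum_range,
        show m - (n + 2 * t) = n - 2 - 2 * t by omega,
        show n - 1 - t - (t + 1) = n - 2 - 2 * t by omega]
    apply Finset.sum_congr rfl
    intro j hj
    rw [Finset.mem_range] at hj
    have e1 : idx n t (n + 2 * t + j) = t + 1 + j := by simp only [idx]; split_ifs <;> omega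
    have e3 : idx n t ((n + 2 * t + j + 1) % m) = (t + 1 + j + 1) % (n - 1) := by
      rcases (by omega : j + 1 = n - 2 - 2 * t ∨ j + 1 < n - 2 - 2 * t) with h | h
      · rcases (by omega : t = 0 ∨ 0 < t) with h0 | h0
        · rw [nmod_eval (n + 2 * t + j + 1) m 0 (by omega) (Or.inr (by omega)),
              nmod_eval (t + 1 + j + 1) (n - 1) 0 (by omega) (Or.inr (by omega))]
          simp only [idx]; split_ifs <;> omega
        · rw [nmod_eval (n + 2 * t + j + 1) m 0 (by omega) (Or.inr (by omega)),
              nmod_eval (t + 1 + j + 1) (n - 1) (n - 1 - t) (by omega) (Or.inl (by omega))]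
          simp only [idx]; split_ifs <;> omega
      · rw [nmod_eval (n + 2 * t + j + 1) m (n + 2 * t + j + 1) (by omega) (Or.inl rfl),
            nmod_eval (t + 1 + j + 1) (n - 1) (t + 1 + j + 1) (by omega) (Or.inl rfl)]
        simp only [idx]; split_ifs <;> omega
    simp only [hf, he, e1, e3]
  have esum : ∑ i ∈ Finset.range (n - 1), e i
      = ((∑ i ∈ Finset.range t, e i) + ∑ i ∈ Finset.Ico t (t + 1), e i)
      + (∑ i ∈ Finset.Ico (t + 1) (n - 1 - t), e i)
      + ∑ i ∈ Finset.Ico (n - 1 - t) (n - 1), e i := by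
    rw [Finset.range_eq_Ico,
        ← Finset.sum_Ico_consecutive e (Nat.zero_le (n - 1 - t)) (show n - 1 - t ≤ n - 1 by omega),
        ← Finset.sum_Ico_consecutive e (Nat.zero_le (t + 1)) (show t + 1 ≤ n - 1 - t by omega),
        ← Finset.sum_Ico_consecutive e (Nat.zero_le t) (show t ≤ t + 1 by omega),
        ← Finset.range_eq_Ico]
  have et : ∑ i ∈ Finset.Ico t (t + 1), e i = d (venue t) (venue (t + 1)) := by
    rw [Finset.sum_Ico_eq_sum_range, show t + 1 - t = 1 by omega, Finset.sum_range_one]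
    simp only [he]
    rw [nmod_eval (t + 0 + 1) (n - 1) (t + 1) (by omega) (Or.inl (by omega)), Nat.add_zero]
  rw [P1, P2, P3, P4, P5, esum, et]
  ring
end

section
/- Under Assumption A, the total traveling distance of the schedule K*_DRR is at most (n−2)τ' + 2·Σ_{v ≠ v*} d(v,v*) + (3/2)τ + nτ/2, where τ' is the length of the constructed cycle on V∖{v*} and τ is the length of a shortest Hamiltonian cycle on V. -/
open Finset

lemma rot (F : ℕ → ℝ) (N : ℕ) : ∀ a, ∑ s ∈ range N, F ((a + s) % N) = ∑ s ∈ range N, F (s % N) := by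
  intro a
  induction a with
  | zero => simp
  | succ a ih =>
    have h1 : ∀ s, F ((a + 1 + s) % N) = F ((a + (s + 1)) % N) := by
      intro s; congr 2; omega
    simp only [h1]
    have h2 : ∑ s ∈ range N, F ((a + (s+1)) % N)
        = (∑ s ∈ range (N+1), F ((a + s) % N)) - F ((a + 0) % N) := by
      rw [Finset.sum_range_succ']; ring
    rw [h2, Finset.sum_range_succ]
    have h3 : (a + N) % N = (a + 0) % N := by
      simp [Nat.add_mod_right]
    rw [h3, ← ih]; ring

lemma pathb {V : Type*} (d : V → V → ℝ) (hdiag : ∀ v, d v v = 0)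
    (htri : ∀ u v w, d u w ≤ d u v + d v w) (f : ℕ → V) :
    ∀ k, d (f 0) (f k) ≤ ∑ i ∈ range k, d (f i) (f (i + 1)) := by
  intro k
  induction k with
  | zero => simp [hdiag]
  | succ k ih =>
    rw [Finset.sum_range_succ]
    calc d (f 0) (f (k+1)) ≤ d (f 0) (f k) + d (f k) (f (k+1)) := htri _ _ _
    _ ≤ _ := by linarith

open Finset
open Fin.NatCast

lemma kstar_eq (n t u : ℕ) (hn : 2 ≤ n) (ht : t < n - 1) :
    Kstar n t u = if (u + (n-1) - t) % (n-1) = t then n - 1 else (u + (n-1) - t) % (n-1) := by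
  unfold Kstar
  rw [if_neg (by omega)]
  have key : (((u:ℤ) - t) % ((n:ℤ) - 1)).toNat = (u + (n-1) - t) % (n-1) := by
    have hm : ((n:ℤ) - 1) = ((n - 1 : ℕ) : ℤ) := by omega
    have h2 : (u:ℤ) - t = ((u + (n-1) - t : ℕ) : ℤ) - ((n-1:ℕ):ℤ) := by omega
    rw [hm, h2, Int.sub_emod, Int.emod_self, sub_zero, Int.emod_emod_of_dvd _ dvd_rfl,
      ← Int.natCast_mod, Int.toNat_natCast]
  simp only [key]

def gA (m t j : ℕ) : ℕ := if j % (2*m) < m then t else (if (t + j) % m = t then m else (t + j) % m)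

lemma gA_mod (m t j : ℕ) : gA m t (j % (2*m)) = gA m t j := by
  unfold gA
  have h1 : j % (2*m) % (2*m) = j % (2*m) := Nat.mod_mod_of_dvd _ dvd_rfl
  have h2 : (t + j % (2*m)) % m = (t + j) % m := by
    conv_lhs => rw [Nat.add_mod, Nat.mod_mod_of_dvd _ ⟨2, by ring⟩]
    rw [← Nat.add_mod]
  rw [h1, h2]

lemma locA {V : Type*} (n : ℕ) (hn : 4 ≤ n) (hev : n % 2 = 0) (venue : ℕ → V) (t : ℕ)
    (ht : t < n / 2) (j : ℕ) (hj : j < 2*(n-1)) :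
    loc n venue t ((2*t + j) % (2*(n-1))) = venue (gA (n-1) t j) := by
  have h2t : 2*t + 1 ≤ n - 1 := by omega
  set m := n - 1 with hm
  have hm0 : 0 < m := by omega
  by_cases hcase : j < m
  · have hs : (2*t + j) % (2*m) = 2*t + j := Nat.mod_eq_of_lt (by omega)
    have hHome : Home n t (2*t+j) = true := by
      unfold Home; rw [if_pos ht]
      simp only [decide_eq_true_eq]
      omega
    rw [hs]
    unfold loc
    rw [if_pos hHome]
    unfold gA
    rw [Nat.mod_eq_of_lt hj, if_pos hcase]
  · have hs : (2*t+j) % (2*m) = 2*t+j ∨ ((2*t+j) % (2*m) = 2*t+j - 2*m ∧ 2*m ≤ 2*t+j) := by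
      by_cases h : 2*t+j < 2*m
      · exact Or.inl (Nat.mod_eq_of_lt h)
      · refine Or.inr ⟨?_, le_of_not_gt h⟩
        rw [Nat.mod_eq_sub_mod (le_of_not_gt h)]
        exact Nat.mod_eq_of_lt (by omega)
    set s := (2*t+j) % (2*m) with hsdef
    have hHome : Home n t s = false := by
      unfold Home; rw [if_pos ht]
      simp only [decide_eq_false_iff_not]
      rcases hs with h | ⟨h, h2⟩ <;> omega
    have e1 : s % m = (2*t + j) % m := by
      rcases hs with h | ⟨h, h2⟩
      · rw [h]
      · rw [h]
        conv_rhs => rw [show 2*t+j = (2*t+j-2*m) + m*2 by omega]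
        rw [Nat.add_mul_mod_self_left]
    have e2 : (s % m + m - t) % m = (t + j) % m := by
      rw [e1, show (2*t+j) % m + m - t = (2*t+j) % m + (m - t) by omega, Nat.mod_add_mod,
        show 2*t+j + (m-t) = t+j + m by omega, Nat.add_mod_right]
    unfold loc
    rw [if_neg (by simp [hHome]), kstar_eq n t _ (by omega) (by omega), e2, ← hm]
    unfold gA
    rw [Nat.mod_eq_of_lt hj, if_neg hcase]
def gB (m t j : ℕ) : ℕ :=
  if j % (2*m) < m then t else (if (t + 1 + j) % m = t then m else (t + 1 + j) % m)

lemma gB_mod (m t j : ℕ) : gB m t (j % (2*m)) = gB m t j := by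
  unfold gB
  have h1 : j % (2*m) % (2*m) = j % (2*m) := Nat.mod_mod_of_dvd _ dvd_rfl
  have h2 : (t + 1 + j % (2*m)) % m = (t + 1 + j) % m := by
    conv_lhs => rw [Nat.add_mod, Nat.mod_mod_of_dvd _ ⟨2, by ring⟩]
    rw [← Nat.add_mod]
  rw [h1, h2]

lemma locB {V : Type*} (n : ℕ) (hn : 4 ≤ n) (hev : n % 2 = 0) (venue : ℕ → V) (t : ℕ)
    (ht1 : n / 2 ≤ t) (ht2 : t ≤ n - 2) (j : ℕ) (hj : j < 2*(n-1)) :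
    loc n venue t ((2*t + 1 + j) % (2*(n-1))) = venue (gB (n-1) t j) := by
  have h2t : n ≤ 2*t := by omega
  set m := n - 1 with hm
  have hm0 : 0 < m := by omega
  have hHomeEq : ∀ s, Home n t s = !(decide (2 * t - n + 2 ≤ s ∧ s ≤ 2 * t)) := by
    intro s; unfold Home; rw [if_neg (by omega), if_pos (by omega)]
  by_cases hcase : j < m
  · have hs : (2*t+1+j) % (2*m) = 2*t+1+j ∨
        ((2*t+1+j) % (2*m) = 2*t+1+j - 2*m ∧ 2*m ≤ 2*t+1+j) := by
      by_cases h : 2*t+1+j < 2*m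
      · exact Or.inl (Nat.mod_eq_of_lt h)
      · refine Or.inr ⟨?_, le_of_not_gt h⟩
        rw [Nat.mod_eq_sub_mod (le_of_not_gt h)]
        exact Nat.mod_eq_of_lt (by omega)
    set s := (2*t+1+j) % (2*m) with hsdef
    have hHome : Home n t s = true := by
      rw [hHomeEq]
      simp only [Bool.not_eq_true', decide_eq_false_iff_not]
      rcases hs with h | ⟨h, h2⟩ <;> omega
    unfold loc
    rw [if_pos hHome]
    unfold gB
    rw [Nat.mod_eq_of_lt hj, if_pos hcase]
  · have hwrap : 2*m ≤ 2*t+1+j := by omega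
    have hs : (2*t+1+j) % (2*m) = 2*t+1+j - 2*m := by
      rw [Nat.mod_eq_sub_mod hwrap]
      exact Nat.mod_eq_of_lt (by omega)
    set s := (2*t+1+j) % (2*m) with hsdef
    have hHome : Home n t s = false := by
      rw [hHomeEq]
      simp only [Bool.not_eq_false', decide_eq_true_eq]
      omega
    have e1 : s % m = (2*t+1+j) % m := by
      rw [hs]
      conv_rhs => rw [show 2*t+1+j = (2*t+1+j-2*m) + m*2 by omega]
      rw [Nat.add_mul_mod_self_left]
    have e2 : (s % m + m - t) % m = (t + 1 + j) % m := by
      rw [e1, show (2*t+1+j) % m + m - t = (2*t+1+j) % m + (m - t) by omega, Nat.mod_add_mod,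
        show 2*t+1+j + (m-t) = t+1+j + m by omega, Nat.add_mod_right]
    unfold loc
    rw [if_neg (by simp [hHome]), kstar_eq n t _ (by omega) (by omega), e2, ← hm]
    unfold gB
    rw [Nat.mod_eq_of_lt hj, if_neg hcase]
lemma peelFirst (f : ℕ → ℝ) (N : ℕ) (hN : 0 < N) :
    ∑ x ∈ range N, f x = (∑ x ∈ range (N-1), f (x+1)) + f 0 := by
  conv_lhs => rw [show N = (N-1)+1 from by omega]
  rw [Finset.sum_range_succ']

lemma peelLast (f : ℕ → ℝ) (N : ℕ) (hN : 0 < N) :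
    ∑ x ∈ range N, f x = (∑ x ∈ range (N-1), f x) + f (N-1) := by
  conv_lhs => rw [show N = (N-1)+1 from by omega]
  rw [Finset.sum_range_succ]

lemma mod_ne_self (m t c : ℕ) (ht : t < m) (hc1 : 0 < c) (hc2 : c < m) : (t + c) % m ≠ t := by
  intro h
  have h2 : t ≡ t + c [MOD m] := by
    unfold Nat.ModEq; rw [h, Nat.mod_eq_of_lt ht]
  have h3 := (Nat.modEq_iff_dvd' (by omega : t ≤ t + c)).mp h2
  rw [show t + c - t = c from by omega] at h3
  exact absurd (Nat.le_of_dvd hc1 h3) (by omega)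

lemma gA_home (m t j : ℕ) (hm : 0 < m) (hj : j < m) : gA m t j = t := by
  unfold gA
  rw [if_pos (by rw [Nat.mod_eq_of_lt (by omega : j < 2*m)]; exact hj)]

lemma gA_zero (m t : ℕ) (hm : 0 < m) : gA m t (2*m) = t := by
  unfold gA
  rw [if_pos (by rw [Nat.mod_self]; exact hm)]

lemma gA_star (m t : ℕ) (hm : 0 < m) (ht : t < m) : gA m t m = m := by
  unfold gA
  rw [if_neg (by rw [Nat.mod_eq_of_lt (by omega : m < 2*m)]; omega)]
  rw [if_pos (by rw [Nat.add_mod_right, Nat.mod_eq_of_lt ht])]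

lemma gA_away (m t x : ℕ) (hm : 0 < m) (ht : t < m) (hx1 : 0 < x) (hx : x < m) :
    gA m t (m + x) = (t + x) % m := by
  unfold gA
  rw [if_neg (by rw [Nat.mod_eq_of_lt (by omega : m + x < 2*m)]; omega)]
  rw [show t + (m + x) = t + x + m from by omega, Nat.add_mod_right]
  rw [if_neg (mod_ne_self m t x ht hx1 hx)]

lemma gB_home (m t j : ℕ) (hm : 0 < m) (hj : j < m) : gB m t j = t := by
  unfold gB
  rw [if_pos (by rw [Nat.mod_eq_of_lt (by omega : j < 2*m)]; exact hj)]

lemma gB_zero (m t : ℕ) (hm : 0 < m) : gB m t (2*m) = t := by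
  unfold gB
  rw [if_pos (by rw [Nat.mod_self]; exact hm)]

lemma gB_star (m t : ℕ) (hm : 0 < m) (ht : t < m) : gB m t (2*m - 1) = m := by
  unfold gB
  rw [if_neg (by rw [Nat.mod_eq_of_lt (by omega : 2*m-1 < 2*m)]; omega)]
  rw [if_pos (by rw [show t + 1 + (2*m-1) = t + m*2 from by omega, Nat.add_mul_mod_self_left,
    Nat.mod_eq_of_lt ht])]

lemma gB_away (m t x : ℕ) (hm : 0 < m) (ht : t < m) (hx : x + 1 < m) :
    gB m t (m + x) = (t + (x+1)) % m := by
  unfold gB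
  rw [if_neg (by rw [Nat.mod_eq_of_lt (by omega : m + x < 2*m)]; omega)]
  rw [show t + 1 + (m + x) = t + (x + 1) + m from by omega, Nat.add_mod_right]
  rw [if_neg (mod_ne_self m t (x+1) ht (by omega) hx)]

lemma gA_sum {V : Type*} (d : V → V → ℝ) (hdiag : ∀ v, d v v = 0) (venue : ℕ → V)
    (m t : ℕ) (hm : 3 ≤ m) (ht : t + 1 < m) :
    ∑ j ∈ range (2*m), d (venue (gA m t j)) (venue (gA m t (j+1)))
    = (∑ i ∈ range m, d (venue i) (venue ((i+1) % m)))
      + (d (venue t) (venue m) + d (venue m) (venue (t+1)) - d (venue t) (venue (t+1))) := by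
  have hm0 : 0 < m := by omega
  have ht' : t < m := by omega
  set E : ℕ → ℝ := fun i => d (venue i) (venue ((i+1) % m)) with hE
  set w : ℕ → ℝ := fun j => d (venue (gA m t j)) (venue (gA m t (j+1))) with hw
  have hw1 : w (m-1) = d (venue t) (venue m) := by
    simp only [hw]
    rw [show m-1+1 = m from by omega, gA_home m t (m-1) hm0 (by omega), gA_star m t hm0 ht']
  have hw2 : w m = d (venue m) (venue (t+1)) := by
    simp only [hw]
    rw [gA_star m t hm0 ht', show m + 1 = m + 1 from rfl,
      gA_away m t 1 hm0 ht' one_pos (by omega), Nat.mod_eq_of_lt ht]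
  have hw3 : ∀ x, x < m - 1 → w (m+1+x) = E ((t+1+x) % m) := by
    intro x hx
    simp only [hw, hE]
    have e1 : gA m t (m+1+x) = (t+1+x) % m := by
      rw [show m+1+x = m + (1+x) from by omega,
        gA_away m t (1+x) hm0 ht' (by omega) (by omega), show t+(1+x) = t+1+x from by omega]
    have e2 : gA m t (m+1+x+1) = (t+1+x+1) % m := by
      by_cases hx2 : x = m-2
      · rw [show m+1+x+1 = 2*m from by omega, gA_zero m t hm0,
          show t+1+x+1 = t + m from by omega, Nat.add_mod_right, Nat.mod_eq_of_lt ht']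
      · rw [show m+1+x+1 = m + (1+x+1) from by omega,
          gA_away m t (1+x+1) hm0 ht' (by omega) (by omega),
          show t+(1+x+1) = t+1+x+1 from by omega]
    rw [e1, e2, Nat.mod_add_mod]
  have hτrot : ∑ x ∈ range m, E ((t + x) % m) = ∑ i ∈ range m, E i := by
    rw [rot E m t]
    exact Finset.sum_congr rfl fun i hi => by rw [Nat.mod_eq_of_lt (Finset.mem_range.mp hi)]
  have hmid : ∑ x ∈ range (m-1), E ((t+1+x) % m) = (∑ i ∈ range m, E i) - E t := by
    have hp := peelFirst (fun x => E ((t+x) % m)) m hm0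
    rw [hτrot] at hp
    have e0 : (t+0) % m = t := by rw [Nat.add_zero, Nat.mod_eq_of_lt ht']
    rw [e0] at hp
    have e1 : ∀ x, E ((t+(x+1))%m) = E ((t+1+x)%m) := fun x => by
      rw [show t+(x+1) = t+1+x from by omega]
    simp only [e1] at hp
    linarith
  have hEt : E t = d (venue t) (venue (t+1)) := by
    simp only [hE]; rw [Nat.mod_eq_of_lt ht]
  rw [show 2*m = (m-1) + (m+1) from by omega, Finset.sum_range_add]
  have hfirst : ∑ j ∈ range (m-1), w j = 0 := by
    apply Finset.sum_eq_zero
    intro j hj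
    have hj' := Finset.mem_range.mp hj
    simp only [hw]
    rw [gA_home m t j hm0 (by omega), gA_home m t (j+1) hm0 (by omega), hdiag]
  rw [hfirst, peelFirst (fun x => w (m-1+x)) (m+1) (by omega)]
  simp only [Nat.add_sub_cancel, Nat.add_zero]
  have e2 : ∀ x, w (m-1+(x+1)) = w (m+x) := fun x => by rw [show m-1+(x+1) = m+x from by omega]
  simp only [e2]
  rw [peelFirst (fun x => w (m+x)) m hm0]
  have e3 : ∀ x, w (m+(x+1)) = w (m+1+x) := fun x => by rw [show m+(x+1) = m+1+x from by omega]
  simp only [e3, Nat.add_zero]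
  rw [Finset.sum_congr rfl (fun x hx => hw3 x (Finset.mem_range.mp hx)), hmid, hw1, hw2, hEt]
  ring

lemma gB_sum {V : Type*} (d : V → V → ℝ) (hdiag : ∀ v, d v v = 0) (venue : ℕ → V)
    (m t : ℕ) (hm : 3 ≤ m) (ht0 : 1 ≤ t) (ht : t < m) :
    ∑ j ∈ range (2*m), d (venue (gB m t j)) (venue (gB m t (j+1)))
    = (∑ i ∈ range m, d (venue i) (venue ((i+1) % m)))
      + (d (venue (t-1)) (venue m) + d (venue m) (venue t) - d (venue (t-1)) (venue t)) := by
  have hm0 : 0 < m := by omega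
  set E : ℕ → ℝ := fun i => d (venue i) (venue ((i+1) % m)) with hE
  set w : ℕ → ℝ := fun j => d (venue (gB m t j)) (venue (gB m t (j+1))) with hw
  have htm : (t + (m-1)) % m = t - 1 := by
    rw [show t + (m-1) = (t-1) + m from by omega, Nat.add_mod_right, Nat.mod_eq_of_lt (by omega)]
  have hw1 : w (m-1) = E t := by
    simp only [hw, hE]
    rw [show m-1+1 = m + 0 from by omega, gB_home m t (m-1) hm0 (by omega),
      gB_away m t 0 hm0 ht (by omega), show 0+1 = 1 from rfl]
  have hw2 : w (2*m-2) = d (venue (t-1)) (venue m) := by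
    simp only [hw]
    rw [show 2*m-2 = m + (m-2) from by omega, gB_away m t (m-2) hm0 ht (by omega),
      show m + (m-2) + 1 = 2*m-1 from by omega, gB_star m t hm0 ht,
      show m-2+1 = m-1 from by omega, htm]
  have hw3 : w (2*m-1) = d (venue m) (venue t) := by
    simp only [hw]
    rw [show 2*m-1+1 = 2*m from by omega, gB_star m t hm0 ht, gB_zero m t hm0]
  have hw4 : ∀ x, x < m - 2 → w (m+x) = E ((t+1+x) % m) := by
    intro x hx
    simp only [hw, hE]
    rw [gB_away m t x hm0 ht (by omega), show m+x+1 = m + (x+1) from by omega,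
      gB_away m t (x+1) hm0 ht (by omega), Nat.mod_add_mod,
      show t+(x+1) = t+1+x from by omega, show t+1+x+1 = t+(x+1+1) from by omega]
  have hτrot : ∑ x ∈ range m, E ((t + x) % m) = ∑ i ∈ range m, E i := by
    rw [rot E m t]
    exact Finset.sum_congr rfl fun i hi => by rw [Nat.mod_eq_of_lt (Finset.mem_range.mp hi)]
  have hmid : E t + ∑ x ∈ range (m-2), E ((t+1+x) % m) = (∑ i ∈ range m, E i) - E (t-1) := by
    have hp := peelFirst (fun x => E ((t+x) % m)) (m-1) (by omega)
    have hq := peelLast (fun x => E ((t+x) % m)) m hm0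
    rw [hτrot, htm] at hq
    have e0 : (t+0) % m = t := by rw [Nat.add_zero, Nat.mod_eq_of_lt ht]
    rw [e0, show m-1-1 = m-2 from by omega] at hp
    have e1 : ∀ x, E ((t+(x+1))%m) = E ((t+1+x)%m) := fun x => by
      rw [show t+(x+1) = t+1+x from by omega]
    simp only [e1] at hp
    linarith
  rw [show 2*m = (m-1) + (m+1) from by omega, Finset.sum_range_add]
  have hfirst : ∑ j ∈ range (m-1), w j = 0 := by
    apply Finset.sum_eq_zero
    intro j hj
    have hj' := Finset.mem_range.mp hj
    simp only [hw]
    rw [gB_home m t j hm0 (by omega), gB_home m t (j+1) hm0 (by omega), hdiag]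
  rw [hfirst, peelFirst (fun x => w (m-1+x)) (m+1) (by omega)]
  simp only [Nat.add_sub_cancel, Nat.add_zero]
  have e2 : ∀ x, w (m-1+(x+1)) = w (m+x) := fun x => by rw [show m-1+(x+1) = m+x from by omega]
  simp only [e2]
  rw [peelLast (fun x => w (m+x)) m hm0]
  rw [peelLast (fun x => w (m+x)) (m-1) (by omega)]
  rw [show m + (m-1) = 2*m-1 from by omega, show m-1-1 = m-2 from by omega,
    show m + (m-2) = 2*m-2 from by omega, hw1, hw2, hw3,
    Finset.sum_congr rfl (fun x hx => hw4 x (Finset.mem_range.mp hx))]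
  have hEt1 : E (t-1) = d (venue (t-1)) (venue t) := by
    simp only [hE]
    rw [show t-1+1 = t from by omega, Nat.mod_eq_of_lt ht]
  linarith [hmid, hEt1]

lemma teamA {V : Type*} (n : ℕ) (hn : 4 ≤ n) (hev : n % 2 = 0) (d : V → V → ℝ)
    (hdiag : ∀ v, d v v = 0) (venue : ℕ → V) (t : ℕ) (ht : t < n / 2) :
    ∑ s ∈ range (2*(n-1)), d (loc n venue t s) (loc n venue t ((s+1) % (2*(n-1))))
    = (∑ i ∈ range (n-1), d (venue i) (venue ((i+1) % (n-1))))
      + (d (venue t) (venue (n-1)) + d (venue (n-1)) (venue (t+1))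
        - d (venue t) (venue (t+1))) := by
  have hm0 : 0 < 2*(n-1) := by omega
  calc ∑ s ∈ range (2*(n-1)), d (loc n venue t s) (loc n venue t ((s+1) % (2*(n-1))))
      = ∑ s ∈ range (2*(n-1)),
          (fun s => d (loc n venue t s) (loc n venue t ((s+1) % (2*(n-1))))) (s % (2*(n-1))) := by
        apply Finset.sum_congr rfl
        intro s hs
        simp only
        rw [Nat.mod_eq_of_lt (Finset.mem_range.mp hs)]
    _ = ∑ j ∈ range (2*(n-1)),
          (fun s => d (loc n venue t s) (loc n venue t ((s+1) % (2*(n-1))))) ((2*t + j) % (2*(n-1))) :=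
        (rot (fun s => d (loc n venue t s) (loc n venue t ((s+1) % (2*(n-1))))) (2*(n-1)) (2*t)).symm
    _ = ∑ j ∈ range (2*(n-1)), d (venue (gA (n-1) t j)) (venue (gA (n-1) t (j+1))) := by
        apply Finset.sum_congr rfl
        intro j hj
        have hj' := Finset.mem_range.mp hj
        simp only
        have e2 : ((2*t + j) % (2*(n-1)) + 1) % (2*(n-1))
            = (2*t + ((j+1) % (2*(n-1)))) % (2*(n-1)) := by
          rw [Nat.mod_add_mod, Nat.add_mod_mod]
          exact congrArg (· % (2*(n-1))) (by omega)
        rw [e2, locA n hn hev venue t ht j hj',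
          locA n hn hev venue t ht ((j+1) % (2*(n-1))) (Nat.mod_lt _ hm0), gA_mod]
    _ = _ := gA_sum d hdiag venue (n-1) t (by omega) (by omega)

lemma teamB {V : Type*} (n : ℕ) (hn : 4 ≤ n) (hev : n % 2 = 0) (d : V → V → ℝ)
    (hdiag : ∀ v, d v v = 0) (venue : ℕ → V) (t : ℕ) (ht1 : n / 2 ≤ t) (ht2 : t ≤ n - 2) :
    ∑ s ∈ range (2*(n-1)), d (loc n venue t s) (loc n venue t ((s+1) % (2*(n-1))))
    = (∑ i ∈ range (n-1), d (venue i) (venue ((i+1) % (n-1))))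
      + (d (venue (t-1)) (venue (n-1)) + d (venue (n-1)) (venue t)
        - d (venue (t-1)) (venue t)) := by
  have hm0 : 0 < 2*(n-1) := by omega
  calc ∑ s ∈ range (2*(n-1)), d (loc n venue t s) (loc n venue t ((s+1) % (2*(n-1))))
      = ∑ s ∈ range (2*(n-1)),
          (fun s => d (loc n venue t s) (loc n venue t ((s+1) % (2*(n-1))))) (s % (2*(n-1))) := by
        apply Finset.sum_congr rfl
        intro s hs
        simp only
        rw [Nat.mod_eq_of_lt (Finset.mem_range.mp hs)]
    _ = ∑ j ∈ range (2*(n-1)),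
          (fun s => d (loc n venue t s) (loc n venue t ((s+1) % (2*(n-1))))) ((2*t + 1 + j) % (2*(n-1))) :=
        (rot (fun s => d (loc n venue t s) (loc n venue t ((s+1) % (2*(n-1))))) (2*(n-1)) (2*t+1)).symm
    _ = ∑ j ∈ range (2*(n-1)), d (venue (gB (n-1) t j)) (venue (gB (n-1) t (j+1))) := by
        apply Finset.sum_congr rfl
        intro j hj
        have hj' := Finset.mem_range.mp hj
        simp only
        have e2 : ((2*t + 1 + j) % (2*(n-1)) + 1) % (2*(n-1))
            = (2*t + 1 + ((j+1) % (2*(n-1)))) % (2*(n-1)) := by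
          rw [Nat.mod_add_mod, Nat.add_mod_mod]
          exact congrArg (· % (2*(n-1))) (by omega)
        rw [e2, locB n hn hev venue t ht1 ht2 j hj',
          locB n hn hev venue t ht1 ht2 ((j+1) % (2*(n-1))) (Nat.mod_lt _ hm0), gB_mod]
    _ = _ := gB_sum d hdiag venue (n-1) t (by omega) (by omega) (by omega)

lemma teamC {V : Type*} (n : ℕ) (hn : 4 ≤ n) (d : V → V → ℝ)
    (hdiag : ∀ v, d v v = 0) (venue : ℕ → V) (B : ℝ) (hB : ∀ u w, d u w ≤ B) :
    ∑ s ∈ range (2*(n-1)), d (loc n venue (n-1) s) (loc n venue (n-1) ((s+1) % (2*(n-1))))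
    ≤ (n : ℝ) * B := by
  have hH : ∀ s, Home n (n-1) s = decide (n-1 ≤ s) := by
    intro s; unfold Home; rw [if_neg (by omega), if_neg (by omega)]
  have hhome : ∀ s, n - 1 ≤ s → loc n venue (n-1) s = venue (n-1) := by
    intro s hs
    unfold loc
    rw [hH, if_pos (by simpa using hs)]
  have hB0 : 0 ≤ B := le_trans (le_of_eq (hdiag (venue 0)).symm) (hB _ _)
  rw [show 2*(n-1) = (n-1) + (n-1) from by omega]
  rw [Finset.sum_range_add]
  have h1 : ∑ s ∈ range (n-1), d (loc n venue (n-1) s)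
      (loc n venue (n-1) ((s+1) % ((n-1)+(n-1)))) ≤ (n-1 : ℕ) • B := by
    have := Finset.sum_le_card_nsmul (range (n-1))
      (fun s => d (loc n venue (n-1) s) (loc n venue (n-1) ((s+1) % ((n-1)+(n-1))))) B
      (fun s _ => hB _ _)
    rwa [Finset.card_range] at this
  have h2 : ∑ x ∈ range (n-1), d (loc n venue (n-1) ((n-1) + x))
      (loc n venue (n-1) (((n-1) + x + 1) % ((n-1)+(n-1)))) ≤ B := by
    rw [peelLast _ (n-1) (by omega)]
    have hz : ∑ x ∈ range (n-1-1), d (loc n venue (n-1) ((n-1) + x))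
        (loc n venue (n-1) (((n-1) + x + 1) % ((n-1)+(n-1)))) = 0 := by
      apply Finset.sum_eq_zero
      intro x hx
      have hx' := Finset.mem_range.mp hx
      rw [Nat.mod_eq_of_lt (by omega), hhome _ (by omega), hhome _ (by omega), hdiag]
    rw [hz, zero_add]
    exact hB _ _
  have hcard : ((n-1 : ℕ) • B) = ((n:ℝ) - 1) * B := by
    rw [nsmul_eq_mul]
    congr 1
    push_cast [Nat.cast_sub (by omega : 1 ≤ n)]
    ring
  calc _ ≤ (n-1 : ℕ) • B + B := add_le_add h1 h2
    _ = (n:ℝ) * B := by rw [hcard]; ring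


theorem stmt_13 {V : Type*} [Fintype V] (n : ℕ) [NeZero n] (hn : 4 ≤ n) (hev : Even n)
    (hcard : Fintype.card V = n)
    (d : V → V → ℝ)
    (hdiag : ∀ v, d v v = 0)
    (hsymm : ∀ u v, d u v = d v u)
    (hnonneg : ∀ u v, 0 ≤ d u v)
    (htri : ∀ u v w, d u w ≤ d u v + d v w)
    (venue : ℕ → V) (hbij : Set.BijOn venue (Set.Iio n) Set.univ)
    (τ τ' : ℝ)
    (hτ : IsLeast {L : ℝ | ∃ c : Fin n ≃ V, L = ∑ i : Fin n, d (c i) (c (i + 1))} τ)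
    (hτ' : τ' = ∑ i ∈ Finset.range (n - 1), d (venue i) (venue ((i + 1) % (n - 1)))) :
    ∑ t ∈ Finset.range n, ∑ s ∈ Finset.range (2 * n - 2),
        d (loc n venue t s) (loc n venue t ((s + 1) % (2 * n - 2)))
    ≤ ((n : ℝ) - 2) * τ' + 2 * (∑ i ∈ Finset.range (n - 1), d (venue i) (venue (n - 1)))
      + (3 / 2) * τ + (n : ℝ) * τ / 2 := by
  have hev2 : n % 2 = 0 := Nat.even_iff.mp hev
  obtain ⟨c, hc⟩ := hτ.1
  have hτ0 : 0 ≤ τ := by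
    rw [hc]; exact Finset.sum_nonneg fun i _ => hnonneg _ _
  -- every distance is at most τ/2
  have hkey : ∀ u w : V, 2 * d u w ≤ τ := by
    intro u w
    by_cases huw : u = w
    · rw [huw, hdiag]; linarith
    · set a := c.symm u with ha
      set b := c.symm w with hb
      set f : ℕ → V := fun k => c (a + (k : Fin n)) with hf
      have hsum : τ = ∑ k ∈ range n, d (f k) (f (k+1)) := by
        rw [hc, ← Fin.sum_univ_eq_sum_range (fun k => d (f k) (f (k+1))) n,
          ← Equiv.sum_comp (Equiv.addLeft a) (fun i => d (c i) (c (i+1)))]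
        apply Finset.sum_congr rfl
        intro i _
        simp only [hf, Equiv.coe_addLeft]
        rw [Nat.cast_add, Nat.cast_one, Fin.cast_val_eq_self, add_assoc]
      obtain ⟨k0, hk0⟩ : ∃ k0 : ℕ, k0 = (b - a : Fin n).val := ⟨_, rfl⟩
      have hk0n : k0 ≤ n := by rw [hk0]; exact le_of_lt (Fin.is_lt _)
      have hk0pos : 0 < k0 := by
        rcases Nat.eq_zero_or_pos k0 with h | h
        · exfalso
          have h1 : b - a = 0 := by
            apply Fin.ext
            rw [← hk0, h, Fin.val_zero]
          have hba : b = a := by rwa [sub_eq_zero] at h1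
          exact huw (by rw [← c.apply_symm_apply u, ← c.apply_symm_apply w, ← ha, ← hb, hba])
        · exact h
      have hf0 : f 0 = u := by
        simp only [hf, Nat.cast_zero, add_zero, ha]
        exact c.apply_symm_apply u
      have hfk0 : f k0 = w := by
        simp only [hf, hk0, Fin.cast_val_eq_self]
        rw [add_comm, sub_add_cancel, hb]
        exact c.apply_symm_apply w
      have hfn : f n = u := by
        simp only [hf]
        rw [show ((n:ℕ) : Fin n) = 0 from Fin.natCast_self n, add_zero, ha]
        exact c.apply_symm_apply u
      have hτ2 : τ = (∑ i ∈ range k0, d (f i) (f (i+1)))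
          + ∑ x ∈ range (n - k0), d (f (k0 + x)) (f (k0 + x + 1)) := by
        have h := Finset.sum_range_add (fun k => d (f k) (f (k+1))) k0 (n - k0)
        rw [show k0 + (n - k0) = n from by omega] at h
        rw [hsum, h]
      have h1 : d u w ≤ ∑ i ∈ range k0, d (f i) (f (i+1)) := by
        have := pathb d hdiag htri f k0
        rwa [hf0, hfk0] at this
      have h2 : d w u ≤ ∑ x ∈ range (n - k0), d (f (k0 + x)) (f (k0 + x + 1)) := by
        have := pathb d hdiag htri (fun x => f (k0 + x)) (n - k0)
        rw [Nat.add_zero, show k0 + (n - k0) = n from by omega, hfk0, hfn] at this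
        exact this
      have h3 : d w u = d u w := hsymm w u
      linarith
  have hhalf : ∀ u w : V, d u w ≤ τ / 2 := fun u w => by linarith [hkey u w]
  rw [show 2*n - 2 = 2*(n-1) from by omega]
  rw [peelLast (fun t => ∑ s ∈ range (2*(n-1)),
    d (loc n venue t s) (loc n venue t ((s+1) % (2*(n-1))))) n (by omega)]
  -- split teams below n-1 at n/2
  have hsplit : ∑ t ∈ range (n-1), ∑ s ∈ range (2*(n-1)),
      d (loc n venue t s) (loc n venue t ((s+1) % (2*(n-1))))
      = (∑ t ∈ range (n/2), ∑ s ∈ range (2*(n-1)),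
          d (loc n venue t s) (loc n venue t ((s+1) % (2*(n-1)))))
        + ∑ k ∈ range (n-1-n/2), ∑ s ∈ range (2*(n-1)),
            d (loc n venue (n/2+k) s) (loc n venue (n/2+k) ((s+1) % (2*(n-1)))) := by
    have h := Finset.sum_range_add (fun t => ∑ s ∈ range (2*(n-1)),
      d (loc n venue t s) (loc n venue t ((s+1) % (2*(n-1))))) (n/2) (n-1-n/2)
    rw [show n/2 + (n-1-n/2) = n-1 from by omega] at h
    rw [h]
  rw [hsplit]
  -- evaluate the A block
  have hAeq : ∑ t ∈ range (n/2), ∑ s ∈ range (2*(n-1)),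
      d (loc n venue t s) (loc n venue t ((s+1) % (2*(n-1))))
      = (n/2 : ℕ) • τ' + ((∑ t ∈ range (n/2), d (venue t) (venue (n-1)))
        + (∑ t ∈ range (n/2), d (venue (n-1)) (venue (t+1)))
        - ∑ t ∈ range (n/2), d (venue t) (venue (t+1))) := by
    rw [Finset.sum_congr rfl (fun t ht' => teamA n hn hev2 d hdiag venue t (Finset.mem_range.mp ht'))]
    rw [← hτ', Finset.sum_add_distrib, Finset.sum_const, Finset.card_range]
    congr 1
    rw [Finset.sum_sub_distrib, Finset.sum_add_distrib]
  -- evaluate the B block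
  have hBeq : ∑ k ∈ range (n-1-n/2), ∑ s ∈ range (2*(n-1)),
      d (loc n venue (n/2+k) s) (loc n venue (n/2+k) ((s+1) % (2*(n-1))))
      = (n-1-n/2 : ℕ) • τ' + ((∑ k ∈ range (n-1-n/2), d (venue (n/2-1+k)) (venue (n-1)))
        + (∑ k ∈ range (n-1-n/2), d (venue (n-1)) (venue (n/2+k)))
        - ∑ k ∈ range (n-1-n/2), d (venue (n/2-1+k)) (venue (n/2-1+k+1))) := by
    have hterm : ∀ k ∈ range (n-1-n/2), ∑ s ∈ range (2*(n-1)),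
        d (loc n venue (n/2+k) s) (loc n venue (n/2+k) ((s+1) % (2*(n-1))))
        = τ' + (d (venue (n/2-1+k)) (venue (n-1)) + d (venue (n-1)) (venue (n/2+k))
          - d (venue (n/2-1+k)) (venue (n/2-1+k+1))) := by
      intro k hk
      have hk' := Finset.mem_range.mp hk
      rw [teamB n hn hev2 d hdiag venue (n/2+k) (by omega) (by omega), ← hτ',
        show n/2+k-1 = n/2-1+k from by omega, show n/2+k = n/2-1+k+1 from by omega]
    rw [Finset.sum_congr rfl hterm, Finset.sum_add_distrib, Finset.sum_const, Finset.card_range]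
    congr 1
    rw [Finset.sum_sub_distrib, Finset.sum_add_distrib]
  rw [hAeq, hBeq]
  -- identity (i)
  have hi1 : (∑ t ∈ range (n/2), d (venue t) (venue (n-1)))
      + (∑ k ∈ range (n-1-n/2), d (venue (n-1)) (venue (n/2+k)))
      = ∑ i ∈ range (n-1), d (venue i) (venue (n-1)) := by
    have h := Finset.sum_range_add (fun i => d (venue i) (venue (n-1))) (n/2) (n-1-n/2)
    rw [show n/2 + (n-1-n/2) = n-1 from by omega] at h
    rw [Finset.sum_congr rfl (fun k _ => hsymm (venue (n-1)) (venue (n/2+k))), h]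
  -- identity (ii)
  have hi2 : (∑ t ∈ range (n/2), d (venue (n-1)) (venue (t+1)))
      + (∑ k ∈ range (n-1-n/2), d (venue (n/2-1+k)) (venue (n-1)))
      = ((∑ i ∈ range (n-1), d (venue i) (venue (n-1)))
          - d (venue 0) (venue (n-1)) - d (venue (n-2)) (venue (n-1)))
        + d (venue (n/2-1)) (venue (n-1)) + d (venue (n/2)) (venue (n-1)) := by
    have e1 : ∑ t ∈ range (n/2), d (venue (n-1)) (venue (t+1))
        = ∑ t ∈ range (n/2), d (venue (t+1)) (venue (n-1)) :=
      Finset.sum_congr rfl fun t _ => hsymm _ _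
    rw [e1, peelLast (fun t => d (venue (t+1)) (venue (n-1))) (n/2) (by omega),
      peelFirst (fun k => d (venue (n/2-1+k)) (venue (n-1))) (n-1-n/2) (by omega)]
    have e2 : ∀ k, d (venue (n/2-1+(k+1))) (venue (n-1)) = d (venue (n/2+k)) (venue (n-1)) :=
      fun k => by rw [show n/2-1+(k+1) = n/2+k from by omega]
    simp only [e2, Nat.add_zero]
    have e3 : (∑ t ∈ range (n/2-1), d (venue (t+1)) (venue (n-1)))
        + ∑ k ∈ range (n-1-n/2-1), d (venue (n/2+k)) (venue (n-1))
        = ∑ x ∈ range (n-3), d (venue (x+1)) (venue (n-1)) := by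
      have e4 : ∀ k, d (venue (n/2+k)) (venue (n-1)) = d (venue ((n/2-1)+k+1)) (venue (n-1)) :=
        fun k => by rw [show (n/2-1)+k+1 = n/2+k from by omega]
      simp only [e4]
      have h := Finset.sum_range_add (fun x => d (venue (x+1)) (venue (n-1))) (n/2-1) (n-1-n/2-1)
      rw [show n/2-1 + (n-1-n/2-1) = n-3 from by omega] at h
      rw [← h]
    have e5 : ∑ x ∈ range (n-3), d (venue (x+1)) (venue (n-1))
        = ((∑ i ∈ range (n-1), d (venue i) (venue (n-1)))
          - d (venue 0) (venue (n-1))) - d (venue (n-2)) (venue (n-1)) := by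
      rw [peelFirst (fun i => d (venue i) (venue (n-1))) (n-1) (by omega)]
      rw [show n-1-1 = n-2 from by omega]
      rw [peelLast (fun x => d (venue (x+1)) (venue (n-1))) (n-2) (by omega)]
      rw [show n-2-1 = n-3 from by omega, show n-3+1 = n-2 from by omega]
      ring
    have e6 : n/2-1+1 = n/2 := by omega
    rw [e6] at *
    linarith [e3, e5]
  -- identity (iii): the road edges
  have hi3 : (∑ t ∈ range (n/2), d (venue t) (venue (t+1)))
      + (∑ k ∈ range (n-1-n/2), d (venue (n/2-1+k)) (venue (n/2-1+k+1)))
      = τ' - d (venue (n-2)) (venue 0) + d (venue (n/2-1)) (venue (n/2)) := by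
    rw [peelFirst (fun k => d (venue (n/2-1+k)) (venue (n/2-1+k+1))) (n-1-n/2) (by omega)]
    have e2 : ∀ k, d (venue (n/2-1+(k+1))) (venue (n/2-1+(k+1)+1)) = d (venue ((n/2)+k)) (venue ((n/2)+k+1)) :=
      fun k => by rw [show n/2-1+(k+1) = n/2+k from by omega]
    simp only [e2, Nat.add_zero]
    have e3 : (∑ t ∈ range (n/2), d (venue t) (venue (t+1)))
        + ∑ k ∈ range (n-1-n/2-1), d (venue (n/2+k)) (venue (n/2+k+1))
        = ∑ x ∈ range (n-2), d (venue x) (venue (x+1)) := by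
      have h := Finset.sum_range_add (fun x => d (venue x) (venue (x+1))) (n/2) (n-1-n/2-1)
      rw [show n/2 + (n-1-n/2-1) = n-2 from by omega] at h
      rw [← h]
    have e5 : τ' = (∑ x ∈ range (n-2), d (venue x) (venue (x+1))) + d (venue (n-2)) (venue 0) := by
      rw [hτ', peelLast (fun i => d (venue i) (venue ((i+1) % (n-1)))) (n-1) (by omega)]
      rw [show n-1-1 = n-2 from by omega, show n-2+1 = n-1 from by omega, Nat.mod_self]
      congr 1
      apply Finset.sum_congr rfl
      intro x hx
      have := Finset.mem_range.mp hx
      rw [Nat.mod_eq_of_lt (by omega)]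
    have e6 : n/2-1+1 = n/2 := by omega
    rw [e6]
    linarith [e3, e5]
  -- bound on team n-1
  have hC : ∑ s ∈ range (2*(n-1)),
      d (loc n venue (n-1) s) (loc n venue (n-1) ((s+1) % (2*(n-1)))) ≤ (n:ℝ) * (τ/2) :=
    teamC n hn d hdiag venue (τ/2) hhalf
  -- final arithmetic
  have hD : d (venue (n-2)) (venue 0) ≤ d (venue (n-2)) (venue (n-1)) + d (venue 0) (venue (n-1)) := by
    calc d (venue (n-2)) (venue 0) ≤ d (venue (n-2)) (venue (n-1)) + d (venue (n-1)) (venue 0) :=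
          htri _ _ _
      _ = _ := by rw [hsymm (venue (n-1)) (venue 0)]
  have hP1 : d (venue (n/2-1)) (venue (n-1)) ≤ τ/2 := hhalf _ _
  have hP2 : d (venue (n/2)) (venue (n-1)) ≤ τ/2 := hhalf _ _
  have he1 : 0 ≤ d (venue (n/2-1)) (venue (n/2)) := hnonneg _ _
  have hcast : ((n/2 : ℕ) : ℝ) + ((n-1-n/2 : ℕ) : ℝ) = (n:ℝ) - 1 := by
    have : (n/2 : ℕ) + (n-1-n/2 : ℕ) = n - 1 := by omega
    have h2 : ((n/2 : ℕ) : ℝ) + ((n-1-n/2 : ℕ) : ℝ) = ((n-1 : ℕ) : ℝ) := by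
      rw [← Nat.cast_add, this]
    rw [h2, Nat.cast_sub (by omega)]
    norm_num
  rw [nsmul_eq_mul, nsmul_eq_mul]
  have hτ'0 : 0 ≤ τ' := by
    rw [hτ']
    exact Finset.sum_nonneg fun i _ => hnonneg _ _
  nlinarith [hi1, hi2, hi3, hC, hD, hP1, hP2, he1, hcast, hτ0, hτ'0]
end

section
/- For even n ≥ 4, the mirrored double round-robin schedule K*_DRR satisfies the no-repeater constraint: no team plays the same opponent in two consecutive slots. -/
theorem stmt_17 (n : ℕ) (hn : 4 ≤ n) (hev : Even n) :
    ∀ t < n, ∀ s ≤ 2 * n - 4,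
      Kstar n t (s % (n - 1)) ≠ Kstar n t ((s + 1) % (n - 1)) := by
  obtain ⟨k, hk⟩ := hev
  intro t ht s hs
  set m := n - 1 with hm
  have hm3 : 3 ≤ m := by omega
  have ha : s % m < m := Nat.mod_lt _ (by omega)
  have hb : (s + 1) % m = (s % m + 1) % m := by
    rw [Nat.add_mod, Nat.mod_eq_of_lt (show 1 < m by omega)]
  have hbb : ((s + 1) % m = s % m + 1 ∧ s % m + 1 < m) ∨
      ((s + 1) % m = 0 ∧ s % m + 1 = m) := by
    by_cases hc : s % m + 1 = m
    · right
      refine ⟨?_, hc⟩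
      rw [hb, hc, Nat.mod_self]
    · left
      have : s % m + 1 < m := by omega
      exact ⟨by rw [hb, Nat.mod_eq_of_lt this], this⟩
  by_cases ht' : t = n - 1
  · simp only [Kstar, if_pos ht']
    rcases hbb with ⟨h1, h2⟩ | ⟨h1, h2⟩ <;> rw [h1] <;> split_ifs <;> omega
  · simp only [Kstar, if_neg ht']
    have hM : ((n : ℤ) - 1) = (m : ℤ) := by push_cast; omega
    rw [hM]
    set a := s % m with hadef
    set b := (s + 1) % m with hbdef
    set r1 : ℤ := ((a : ℤ) - t) % m with hr1
    set r2 : ℤ := ((b : ℤ) - t) % m with hr2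
    have hmpos : (0 : ℤ) < (m : ℤ) := by exact_mod_cast (by omega : 0 < m)
    have h10 : 0 ≤ r1 := Int.emod_nonneg _ (by omega)
    have h11 : r1 < m := Int.emod_lt_of_pos _ hmpos
    have h20 : 0 ≤ r2 := Int.emod_nonneg _ (by omega)
    have h21 : r2 < m := Int.emod_lt_of_pos _ hmpos
    have key : r1 ≠ r2 := by
      intro h
      have hd : ((b : ℤ) - t - ((a : ℤ) - t)) % m = 0 := by
        rw [Int.sub_emod, ← hr1, ← hr2, h, sub_self, Int.zero_emod]
      have hdvd : (m : ℤ) ∣ ((b : ℤ) - a) := by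
        have : (b : ℤ) - t - ((a : ℤ) - t) = (b : ℤ) - a := by ring
        rw [this] at hd
        exact Int.dvd_of_emod_eq_zero hd
      rcases hbb with ⟨h1, h2⟩ | ⟨h1, h2⟩
      · have : (b : ℤ) - a = 1 := by rw [h1]; push_cast; ring
        rw [this] at hdvd
        have := Int.le_of_dvd (by norm_num) hdvd
        omega
      · have : (b : ℤ) - a = 1 - m := by
          rw [h1]
          have : (a : ℤ) = (m : ℤ) - 1 := by
            have := h2; push_cast; omega
          omega
        rw [this] at hdvd
        have h1 : (m : ℤ) ∣ 1 := by
          have := dvd_add hdvd (dvd_refl (m : ℤ))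
          simpa using this
        have := Int.le_of_dvd (by norm_num) h1
        omega
    split_ifs <;> omega
end

section
/- For a double round-robin tournament on n teams (n even, n ≥ 4) whose venue distances are symmetric, nonnegative, and satisfy the triangle inequality, the total traveling distance of any feasible schedule is at least nτ, where τ is the length of a shortest Hamiltonian cycle on the n home venues. -/
lemma chain_bound {V : Type*} (d : V → V → ℝ) (hdiag : ∀ v, d v v = 0)
    (htri : ∀ u v w, d u w ≤ d u v + d v w) (r : ℕ → V) :
    ∀ a b, a ≤ b → d (r a) (r b) ≤ ∑ j ∈ Finset.Ico a b, d (r j) (r (j + 1)) := by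
  intro a b hab
  induction b, hab using Nat.le_induction with
  | base => simp [hdiag]
  | succ b hab ih =>
    rw [Finset.sum_Ico_succ_top hab]
    calc d (r a) (r (b + 1)) ≤ d (r a) (r b) + d (r b) (r (b + 1)) := htri _ _ _
      _ ≤ _ := by linarith

lemma tele_sum (e : ℕ → ℝ) (G : ℕ → ℕ) (hG : Monotone G) (N : ℕ) :
    ∑ k ∈ Finset.range N, ∑ j ∈ Finset.Ico (G k) (G (k + 1)), e j
      = ∑ j ∈ Finset.Ico (G 0) (G N), e j := by
  induction N with
  | zero => simp
  | succ N ih =>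
    rw [Finset.sum_range_succ, ih,
      Finset.sum_Ico_consecutive _ (hG (Nat.zero_le N)) (hG (Nat.le_succ N))]

theorem stmt_18 {V : Type*} [Fintype V] (n : ℕ) [NeZero n] (hn : 4 ≤ n) (hev : Even n)
    (hcard : Fintype.card V = n) (d : V → V → ℝ)
    (hdiag : ∀ v, d v v = 0)
    (hsymm : ∀ u v, d u v = d v u)
    (hnonneg : ∀ u v, 0 ≤ d u v)
    (htri : ∀ u v w, d u w ≤ d u v + d v w)
    (τ : ℝ)
    (hτ : IsLeast {L : ℝ | ∃ c : Fin n ≃ V, L = ∑ i : Fin n, d (c i) (c (i + 1))} τ)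
    (home : Fin n ≃ V)
    (route : Fin n → ℕ → V) (len : Fin n → ℕ)
    (hstart : ∀ t, route t 0 = home t)
    (hend : ∀ t, route t (len t) = home t)
    (hvisit : ∀ t, ∀ x : V, ∃ i ≤ len t, route t i = x) :
    (n : ℝ) * τ ≤ ∑ t : Fin n, ∑ i ∈ Finset.range (len t), d (route t i) (route t (i + 1)) := by
  classical
  have key : ∀ t : Fin n, τ ≤ ∑ i ∈ Finset.range (len t), d (route t i) (route t (i + 1)) := by
    intro t
    -- first-visit function
    have hex : ∀ x : V, ∃ i, route t i = x := by
      intro x; obtain ⟨i, _, hi⟩ := hvisit t x; exact ⟨i, hi⟩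
    set f : V → ℕ := fun x => Nat.find (hex x) with hf
    have hfr : ∀ x, route t (f x) = x := fun x => Nat.find_spec (hex x)
    have hfle : ∀ x, f x ≤ len t := by
      intro x; obtain ⟨i, hi, hix⟩ := hvisit t x
      exact le_trans (Nat.find_min' (hex x) hix) hi
    have hfinj : Function.Injective f := by
      intro x y hxy
      rw [← hfr x, ← hfr y, hxy]
    have hfhome : f (home t) = 0 := Nat.le_zero.mp (Nat.find_min' (hex _) (hstart t))
    set S : Finset ℕ := Finset.image f Finset.univ with hS
    have hScard : S.card = n := by
      rw [hS, Finset.card_image_of_injective _ hfinj, Finset.card_univ, hcard]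
    set g : Fin n → ℕ := fun i => ((S.orderIsoOfFin hScard) i : ℕ) with hg
    have hgmono : StrictMono g := fun i j hij => (S.orderIsoOfFin hScard).strictMono hij
    have hgmem : ∀ i, g i ∈ S := fun i => ((S.orderIsoOfFin hScard) i).2
    have hgroute : ∀ i, f (route t (g i)) = g i := by
      intro i
      obtain ⟨x, _, hx⟩ := Finset.mem_image.mp (hgmem i)
      rw [← hx, hfr]
    have hglen : ∀ i, g i ≤ len t := by
      intro i
      obtain ⟨x, _, hx⟩ := Finset.mem_image.mp (hgmem i)
      rw [← hx]; exact hfle x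
    have hg0 : g 0 = 0 := by
      have h0S : (0 : ℕ) ∈ S := by
        rw [← hfhome]; exact Finset.mem_image_of_mem f (Finset.mem_univ _)
      obtain ⟨j, hj⟩ := (S.orderIsoOfFin hScard).surjective ⟨0, h0S⟩
      have h1 : g j = 0 := by rw [hg]; exact congrArg Subtype.val hj
      have h2 : (0 : Fin n) ≤ j := Fin.zero_le j
      have := hgmono.monotone h2
      omega
    -- the Hamiltonian cycle
    have hbij : Function.Bijective (fun i : Fin n => route t (g i)) := by
      rw [Fintype.bijective_iff_injective_and_card]
      constructor
      · intro i j hij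
        have hij' : route t (g i) = route t (g j) := hij
        have : g i = g j := by rw [← hgroute i, ← hgroute j, hij']
        exact hgmono.injective this
      · simp [hcard]
    set c : Fin n ≃ V := Equiv.ofBijective _ hbij with hc
    have hcval : ∀ i, c i = route t (g i) := fun i => rfl
    have hτle : τ ≤ ∑ i : Fin n, d (c i) (c (i + 1)) := hτ.2 ⟨c, rfl⟩
    refine le_trans hτle ?_
    -- now bound the cycle sum by the walk sum
    obtain ⟨m, hm⟩ := Nat.exists_eq_succ_of_ne_zero (NeZero.ne n)
    subst hm
    set G : ℕ → ℕ := fun k => if h : k < m + 1 then g ⟨k, h⟩ else len t with hGdef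
    have hGval : ∀ k (h : k < m + 1), G k = g ⟨k, h⟩ := by
      intro k h; simp only [hGdef, dif_pos h]
    have hGtop : G (m + 1) = len t := by simp [hGdef]
    have hGmono : Monotone G := by
      intro a b hab
      by_cases hb : b < m + 1
      · have ha : a < m + 1 := lt_of_le_of_lt hab hb
        rw [hGval a ha, hGval b hb]
        exact hgmono.monotone (by exact hab)
      · rw [hGdef]; simp only [hb, dif_neg, not_false_iff]
        by_cases ha : a < m + 1
        · simp only [ha, dif_pos]; exact hglen _
        · simp [ha]
    have hchunk : ∀ k, k < m + 1 →
        d (route t (G k)) (route t (G (k + 1)))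
          ≤ ∑ j ∈ Finset.Ico (G k) (G (k + 1)), d (route t j) (route t (j + 1)) :=
      fun k _ => chain_bound d hdiag htri (route t) _ _ (hGmono (Nat.le_succ k))
    have hcycle : ∑ i : Fin (m + 1), d (c i) (c (i + 1))
        = ∑ k ∈ Finset.range (m + 1), d (route t (G k)) (route t (G (k + 1))) := by
      rw [Fin.sum_univ_castSucc, Finset.sum_range_succ]
      congr 1
      · have hterm : ∀ i : Fin m, d (c i.castSucc) (c (i.castSucc + 1))
            = (fun k => d (route t (G k)) (route t (G (k + 1)))) (i : ℕ) := by
          intro i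
          have h1 : (i : ℕ) < m + 1 := Nat.lt_succ_of_lt i.isLt
          have h2 : (i : ℕ) + 1 < m + 1 := Nat.succ_lt_succ i.isLt
          have e2 : i.castSucc + 1 = (⟨(i : ℕ) + 1, h2⟩ : Fin (m + 1)) := by
            rw [Fin.coeSucc_eq_succ]; rfl
          show d (c i.castSucc) (c (i.castSucc + 1))
            = d (route t (G (i : ℕ))) (route t (G ((i : ℕ) + 1)))
          rw [e2, hcval, hcval, hGval _ h1, hGval _ h2]
          rfl
        rw [Finset.sum_congr rfl (fun i _ => hterm i),
          Fin.sum_univ_eq_sum_range (fun k => d (route t (G k)) (route t (G (k + 1)))) m]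
      · have hlast : (Fin.last m : Fin (m + 1)) + 1 = 0 := by
          rw [Fin.last_add_one]
        have e1 : G m = g (Fin.last m) := hGval m (Nat.lt_succ_self m)
        rw [hlast, hcval, hcval, hg0, hstart, ← hend t, hGtop, e1]
    rw [hcycle]
    calc ∑ k ∈ Finset.range (m + 1), d (route t (G k)) (route t (G (k + 1)))
        ≤ ∑ k ∈ Finset.range (m + 1),
            ∑ j ∈ Finset.Ico (G k) (G (k + 1)), d (route t j) (route t (j + 1)) := by
          apply Finset.sum_le_sum
          intro k hk
          exact hchunk k (Finset.mem_range.mp hk)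
      _ = ∑ j ∈ Finset.Ico (G 0) (G (m + 1)), d (route t j) (route t (j + 1)) :=
          tele_sum _ _ hGmono _
      _ = ∑ j ∈ Finset.range (len t), d (route t j) (route t (j + 1)) := by
          rw [hGtop, hGval 0 (Nat.succ_pos m), show (⟨0, Nat.succ_pos m⟩ : Fin (m+1)) = 0 from rfl,
            hg0]
          rw [Finset.range_eq_Ico]
  calc (n : ℝ) * τ = ∑ _t : Fin n, τ := by
        rw [Finset.sum_const, Finset.card_univ, Fintype.card_fin, nsmul_eq_mul]
    _ ≤ _ := Finset.sum_le_sum fun t _ => key t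
end
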